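/- arXiv:cond-mat/0506525 — 11 statements merged into one kernel-verified Lean document; each statement's English description precedes it below -/
import Mathlib

section
/- With $F_{k,l}(x,t)$ as defined via the contour integral, for integers $x_1\le x_2$ one has the telescoping summation identity $\sum_{x=x_1}^{x_2} v_l^{\,x}\,F_{k,l}(x,t)= v_l^{\,x_1}F_{k,l+1}(x_1,t)-v_l^{\,x_2+1}F_{k,l+1}(x_2+1,t)$. -/
open Finset

/-- The contour-integral function `F_{k,l}(x,t)` of Rákos–Schütz:
`F_{k,l}(x,t) = (2πi)⁻¹ ∮ e^{t/z} z^{x-1} ∏_{i=1}^{l-1}(1 - v_i z)⁻¹ ∏_{i=1}^{k-1}(1 - v_i z) dz`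
along a circle of radius `ε` around the origin.  The rates are `v 1, v 2, …`. -/
noncomputable def F (v : ℕ → ℝ) (ε : ℝ) (k l : ℕ) (x : ℤ) (t : ℝ) : ℂ :=
  (2 * Real.pi * Complex.I)⁻¹ *
    (∮ z in C(0, ε), Complex.exp ((t : ℂ) / z) * z ^ (x - 1) *
      (∏ i ∈ range (l - 1), (1 - (v (i + 1) : ℂ) * z)⁻¹) *
      ∏ i ∈ range (k - 1), (1 - (v (i + 1) : ℂ) * z))

lemma aux_cont (v : ℕ → ℝ) (ε : ℝ) (hε : 0 < ε)
    (hne : ∀ z ∈ Metric.sphere (0:ℂ) ε, ∀ i, (1 - (v i : ℂ) * z) ≠ 0)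
    (k L : ℕ) (x : ℤ) (t : ℝ) :
    ContinuousOn (fun z : ℂ => Complex.exp ((t : ℂ) / z) * z ^ (x - 1) *
      (∏ i ∈ range L, (1 - (v (i + 1) : ℂ) * z)⁻¹) *
      ∏ i ∈ range (k - 1), (1 - (v (i + 1) : ℂ) * z)) (Metric.sphere (0:ℂ) ε) := by
  have hz0 : ∀ z ∈ Metric.sphere (0:ℂ) ε, z ≠ 0 := fun z hz => Metric.ne_of_mem_sphere hz hε.ne'
  apply ContinuousOn.mul
  apply ContinuousOn.mul
  apply ContinuousOn.mul
  · exact Complex.continuous_exp.comp_continuousOn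
      (continuousOn_const.div continuousOn_id hz0)
  · exact continuousOn_id.zpow₀ _ (fun z hz => Or.inl (hz0 z hz))
  · exact continuousOn_finset_prod _ fun i _ =>
      (continuousOn_const.sub (continuousOn_const.mul continuousOn_id)).inv₀
        (fun z hz => hne z hz _)
  · exact continuousOn_finset_prod _ fun i _ =>
      continuousOn_const.sub (continuousOn_const.mul continuousOn_id)

lemma aux_key (v : ℕ → ℝ) (vmax : ℝ) (hv : ∀ i, 0 < v i) (hvm : ∀ i, v i ≤ vmax)
    (ε : ℝ) (hε : 0 < ε) (hεm : ε < 1 / vmax) (t : ℝ) (k l : ℕ) (hl : 1 ≤ l) (x : ℤ) :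
    (v l : ℂ) ^ x * F v ε k l x t =
      (v l : ℂ) ^ x * F v ε k (l + 1) x t -
        (v l : ℂ) ^ (x + 1) * F v ε k (l + 1) (x + 1) t := by
  obtain ⟨m, rfl⟩ : ∃ m, l = m + 1 := ⟨l - 1, (Nat.succ_pred_eq_of_pos hl).symm⟩
  have hvmax : 0 < vmax := (hv 0).trans_le (hvm 0)
  have hz0 : ∀ z ∈ Metric.sphere (0:ℂ) ε, z ≠ 0 := fun z hz => Metric.ne_of_mem_sphere hz hε.ne'
  have hne : ∀ z ∈ Metric.sphere (0:ℂ) ε, ∀ i, (1 - (v i : ℂ) * z) ≠ 0 := by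
    intro z hz i h
    have h1 : (v i : ℂ) * z = 1 := by linear_combination -h
    have h2 : ‖(v i : ℂ) * z‖ = v i * ε := by
      rw [norm_mul, Complex.norm_real, Real.norm_of_nonneg (hv i).le,
        mem_sphere_zero_iff_norm.mp hz]
    rw [h1, norm_one] at h2
    have h3 : v i * ε < 1 := by
      calc v i * ε ≤ vmax * ε := mul_le_mul_of_nonneg_right (hvm i) hε.le
        _ < vmax * (1 / vmax) := by exact mul_lt_mul_of_pos_left hεm hvmax
        _ = 1 := by field_simp
    rw [← h2] at h3; exact lt_irrefl _ h3
  set w : ℂ := ((v (m + 1) : ℝ) : ℂ) with hw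
  have hwne : w ≠ 0 := by
    simp only [hw, ne_eq, Complex.ofReal_eq_zero]; exact (hv (m + 1)).ne'
  -- the integrands
  set g : ℤ → ℂ → ℂ := fun y z => Complex.exp ((t : ℂ) / z) * z ^ (y - 1) *
      (∏ i ∈ range (m + 1), (1 - (v (i + 1) : ℂ) * z)⁻¹) *
      ∏ i ∈ range (k - 1), (1 - (v (i + 1) : ℂ) * z) with hg
  set f : ℂ → ℂ := fun z => Complex.exp ((t : ℂ) / z) * z ^ (x - 1) *
      (∏ i ∈ range m, (1 - (v (i + 1) : ℂ) * z)⁻¹) *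
      ∏ i ∈ range (k - 1), (1 - (v (i + 1) : ℂ) * z) with hf
  have hEq : Set.EqOn f (fun z => g x z - w • g (x + 1) z) (Metric.sphere (0:ℂ) ε) := by
    intro z hz
    have h0 : z ≠ 0 := hz0 z hz
    have h1 : (1 - w * z) ≠ 0 := hne z hz (m + 1)
    simp only [hf, hg, prod_range_succ, smul_eq_mul]
    have hx1 : z ^ (x + 1 - 1) = z ^ (x - 1) * z := by
      rw [show x + 1 - 1 = x - 1 + 1 by ring, zpow_add_one₀ h0]
    have hP : (∏ i ∈ range m, (1 - (v (i + 1) : ℂ) * z)) ≠ 0 :=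
      Finset.prod_ne_zero_iff.mpr fun i _ => hne z hz _
    rw [hx1, hw]
    field_simp
    ring_nf
    have h1' : (1 - z * (v (1 + m) : ℂ)) ≠ 0 := by rw [add_comm 1 m, mul_comm]; exact h1
    field_simp
    ring
  have hcf : CircleIntegrable f 0 ε :=
    (aux_cont v ε hε hne k m x t).circleIntegrable hε.le
  have hcg : ∀ y : ℤ, CircleIntegrable (g y) 0 ε := fun y =>
    (aux_cont v ε hε hne k (m + 1) y t).circleIntegrable hε.le
  have hcg' : CircleIntegrable (fun z => w • g (x + 1) z) 0 ε := (hcg (x + 1)).smul w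
  have key : (∮ z in C(0, ε), f z) =
      (∮ z in C(0, ε), g x z) - w * (∮ z in C(0, ε), g (x + 1) z) := by
    rw [circleIntegral.integral_congr hε.le hEq,
      circleIntegral.integral_sub (hcg x) hcg', circleIntegral.integral_smul]
    simp [smul_eq_mul]
  have hF1 : F v ε k (m + 1) x t = (2 * Real.pi * Complex.I)⁻¹ * ∮ z in C(0, ε), f z := by
    simp only [F, hf, Nat.add_sub_cancel]
  have hF2 : ∀ y : ℤ, F v ε k (m + 1 + 1) y t =
      (2 * Real.pi * Complex.I)⁻¹ * ∮ z in C(0, ε), g y z := by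
    intro y; simp only [F, hg, Nat.add_sub_cancel]
  rw [hF1, hF2, hF2, key, zpow_add_one₀ hwne]
  ring
theorem telescoping_sum_column
    (v : ℕ → ℝ) (vmax : ℝ) (hv : ∀ i, 0 < v i) (hvm : ∀ i, v i ≤ vmax)
    (ε : ℝ) (hε : 0 < ε) (hεm : ε < 1 / vmax)
    (t : ℝ) (ht : 0 ≤ t) (k l : ℕ) (hk : 1 ≤ k) (hl : 1 ≤ l)
    (x₁ x₂ : ℤ) (hx : x₁ ≤ x₂) :
    ∑ x ∈ Finset.Icc x₁ x₂, (v l : ℂ) ^ x * F v ε k l x t =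
      (v l : ℂ) ^ x₁ * F v ε k (l + 1) x₁ t -
        (v l : ℂ) ^ (x₂ + 1) * F v ε k (l + 1) (x₂ + 1) t := by
  have hkey : ∀ x : ℤ, (v l : ℂ) ^ x * F v ε k l x t =
      (v l : ℂ) ^ x * F v ε k (l + 1) x t -
        (v l : ℂ) ^ (x + 1) * F v ε k (l + 1) (x + 1) t :=
    fun x => aux_key v vmax hv hvm ε hε hεm t k l hl x
  have H : ∀ b : ℤ, x₁ ≤ b → (∑ x ∈ Finset.Icc x₁ b, (v l : ℂ) ^ x * F v ε k l x t =
      (v l : ℂ) ^ x₁ * F v ε k (l + 1) x₁ t -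
        (v l : ℂ) ^ (b + 1) * F v ε k (l + 1) (b + 1) t) := by
    refine Int.le_induction ?_ ?_
    · rw [Finset.Icc_self, Finset.sum_singleton, hkey]
    · intro n hn ih
      have hins : Finset.Icc x₁ (n + 1) = insert (n + 1) (Finset.Icc x₁ n) := by
        ext y; simp only [Finset.mem_Icc, Finset.mem_insert]; omega
      rw [hins, Finset.sum_insert (by simp), ih, hkey]
      ring
  exact H x₂ hx
end

section
/- With $F_{k,l}(x,t)$ as defined via the contour integral, for integers $x_1\le x_2$ and $k\ge 2$ one has $\sum_{x=x_1}^{x_2} v_{k-1}^{\,x}\,F_{k,l}(x,t)= v_{k-1}^{\,x_1}F_{k-1,l}(x_1,t)-v_{k-1}^{\,x_2+1}F_{k-1,l}(x_2+1,t)$. -/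
open Finset

private lemma telesc (f : ℤ → ℂ) (a : ℤ) : ∀ b, a ≤ b →
    ∑ x ∈ Finset.Icc a b, (f x - f (x + 1)) = f a - f (b + 1) := by
  refine Int.le_induction ?_ ?_
  · simp
  · intro n hn ih
    have hins : Finset.Icc a (n + 1) = insert (n + 1) (Finset.Icc a n) := by
      ext x; simp only [Finset.mem_Icc, Finset.mem_insert]; omega
    rw [hins, Finset.sum_insert (by simp), ih]
    ring

private lemma factor_ne (v : ℕ → ℝ) (vmax : ℝ) (hv : ∀ i, 0 < v i) (hvm : ∀ i, v i ≤ vmax)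
    (ε : ℝ) (hε : 0 < ε) (hεm : ε < 1 / vmax) (i : ℕ) {z : ℂ}
    (hz : z ∈ Metric.sphere (0 : ℂ) ε) : (1 : ℂ) - (v i : ℂ) * z ≠ 0 := by
  have hvmax : 0 < vmax := lt_of_lt_of_le (hv 0) (hvm 0)
  have hzabs : ‖z‖ = ε := by
    simpa [Complex.dist_eq] using hz
  intro h
  have h1 : (1 : ℂ) = (v i : ℂ) * z := by linear_combination h
  have : (1 : ℝ) = ‖(v i : ℂ) * z‖ := by
    rw [← h1]; simp
  rw [norm_mul, Complex.norm_real, Real.norm_of_nonneg (hv i).le, hzabs] at this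
  have hlt : v i * ε < 1 := by
    calc v i * ε ≤ vmax * ε := mul_le_mul_of_nonneg_right (hvm i) hε.le
    _ < 1 := by
        rw [lt_div_iff₀ hvmax] at hεm; nlinarith
  linarith

private lemma contOn (v : ℕ → ℝ) (vmax : ℝ) (hv : ∀ i, 0 < v i) (hvm : ∀ i, v i ≤ vmax)
    (ε : ℝ) (hε : 0 < ε) (hεm : ε < 1 / vmax) (t : ℝ) (m n : ℕ) (y : ℤ) :
    ContinuousOn (fun z : ℂ => Complex.exp ((t : ℂ) / z) * z ^ (y - 1) *
      (∏ i ∈ range m, (1 - (v (i + 1) : ℂ) * z)⁻¹) *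
      ∏ i ∈ range n, (1 - (v (i + 1) : ℂ) * z)) (Metric.sphere (0 : ℂ) ε) := by
  have hz0 : ∀ z ∈ Metric.sphere (0 : ℂ) ε, z ≠ 0 := by
    intro z hz h
    have : ‖z‖ = ε := by simpa [Complex.dist_eq] using hz
    rw [h] at this; simp at this; linarith
  refine ContinuousOn.mul (ContinuousOn.mul (ContinuousOn.mul ?_ ?_) ?_) ?_
  · exact (continuousOn_const.div continuousOn_id hz0).cexp
  · exact continuousOn_id.zpow₀ _ fun z hz => Or.inl (hz0 z hz)
  · exact continuousOn_finset_prod _ fun i _ =>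
      (continuousOn_const.sub (continuousOn_const.mul continuousOn_id)).inv₀
        (fun z hz => factor_ne v vmax hv hvm ε hε hεm (i + 1) hz)
  · exact continuousOn_finset_prod _ fun i _ =>
      continuousOn_const.sub (continuousOn_const.mul continuousOn_id)

set_option maxHeartbeats 2000000 in
theorem telescoping_sum_row
    (v : ℕ → ℝ) (vmax : ℝ) (hv : ∀ i, 0 < v i) (hvm : ∀ i, v i ≤ vmax)
    (ε : ℝ) (hε : 0 < ε) (hεm : ε < 1 / vmax)
    (t : ℝ) (ht : 0 ≤ t) (k l : ℕ) (hk : 2 ≤ k) (hl : 1 ≤ l)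
    (x₁ x₂ : ℤ) (hx : x₁ ≤ x₂) :
    ∑ x ∈ Finset.Icc x₁ x₂, (v (k - 1) : ℂ) ^ x * F v ε k l x t =
      (v (k - 1) : ℂ) ^ x₁ * F v ε (k - 1) l x₁ t -
        (v (k - 1) : ℂ) ^ (x₂ + 1) * F v ε (k - 1) l (x₂ + 1) t := by
  set c : ℂ := (v (k - 1) : ℂ) with hc
  have hczero : c ≠ 0 := by
    simp only [hc, Ne, Complex.ofReal_eq_zero]
    exact ne_of_gt (hv (k - 1))
  -- the per-term identity
  have key : ∀ x : ℤ, c ^ x * F v ε k l x t =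
      c ^ x * F v ε (k - 1) l x t - c ^ (x + 1) * F v ε (k - 1) l (x + 1) t := by
    intro x
    have hz0 : ∀ z ∈ Metric.sphere (0 : ℂ) ε, z ≠ 0 := by
      intro z hz h
      have : ‖z‖ = ε := by simpa [Complex.dist_eq] using hz
      rw [h] at this; simp at this; linarith
    set A : ℂ → ℂ := fun z => Complex.exp ((t : ℂ) / z) * z ^ (x - 1) *
      (∏ i ∈ range (l - 1), (1 - (v (i + 1) : ℂ) * z)⁻¹) *
      ∏ i ∈ range (k - 1 - 1), (1 - (v (i + 1) : ℂ) * z) with hA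
    set B : ℂ → ℂ := fun z => Complex.exp ((t : ℂ) / z) * z ^ ((x + 1) - 1) *
      (∏ i ∈ range (l - 1), (1 - (v (i + 1) : ℂ) * z)⁻¹) *
      ∏ i ∈ range (k - 1 - 1), (1 - (v (i + 1) : ℂ) * z) with hB
    have hAint : CircleIntegrable A 0 ε :=
      (contOn v vmax hv hvm ε hε hεm t _ _ x).circleIntegrable hε.le
    have hBint : CircleIntegrable B 0 ε :=
      (contOn v vmax hv hvm ε hε hεm t _ _ (x + 1)).circleIntegrable hε.le
    have hkk : k - 1 = (k - 1 - 1) + 1 := by omega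
    -- the k-integrand equals A z - c * B z on the sphere
    have hEq : Set.EqOn
        (fun z : ℂ => Complex.exp ((t : ℂ) / z) * z ^ (x - 1) *
          (∏ i ∈ range (l - 1), (1 - (v (i + 1) : ℂ) * z)⁻¹) *
          ∏ i ∈ range (k - 1), (1 - (v (i + 1) : ℂ) * z))
        (fun z => A z - c * B z) (Metric.sphere (0 : ℂ) ε) := by
      intro z hz
      have hzne := hz0 z hz
      have hprod : ∏ i ∈ range (k - 1), (1 - (v (i + 1) : ℂ) * z) =
          (∏ i ∈ range (k - 1 - 1), (1 - (v (i + 1) : ℂ) * z)) * (1 - c * z) := by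
        have hidx : k - 1 - 1 + 1 = k - 1 := by omega
        rw [hkk, Finset.prod_range_succ, hidx, hc]
      have hzz : z ^ ((x + 1) - 1) = z ^ (x - 1) * z := by
        rw [show (x + 1) - 1 = (x - 1) + 1 by ring, zpow_add_one₀ hzne]
      simp only [hA, hB, hprod, hzz]
      ring
    have hint : (∮ z in C(0, ε), Complex.exp ((t : ℂ) / z) * z ^ (x - 1) *
          (∏ i ∈ range (l - 1), (1 - (v (i + 1) : ℂ) * z)⁻¹) *
          ∏ i ∈ range (k - 1), (1 - (v (i + 1) : ℂ) * z)) =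
        (∮ z in C(0, ε), A z) - c * ∮ z in C(0, ε), B z := by
      have hcBint : CircleIntegrable (fun z => c * B z) 0 ε :=
        (continuousOn_const.mul (contOn v vmax hv hvm ε hε hεm t _ _ (x + 1))).circleIntegrable
          hε.le
      rw [circleIntegral.integral_congr hε.le hEq,
        circleIntegral.integral_sub hAint hcBint]
      congr 1
      simpa [smul_eq_mul] using circleIntegral.integral_smul c B 0 ε
    simp only [F, hint, hA, hB]
    rw [zpow_add_one₀ hczero]
    ring
  calc ∑ x ∈ Finset.Icc x₁ x₂, c ^ x * F v ε k l x t
      = ∑ x ∈ Finset.Icc x₁ x₂,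
          (c ^ x * F v ε (k - 1) l x t - c ^ (x + 1) * F v ε (k - 1) l (x + 1) t) :=
        Finset.sum_congr rfl fun x _ => key x
    _ = _ := telesc (fun x => c ^ x * F v ε (k - 1) l x t) x₁ x₂ hx
end

section
/- Let $v_1,\dots,v_N>0$ and let $S_\pi$ be a family of complex numbers indexed by permutations $\pi$ of $\{1,\dots,N\}$ satisfying the Bethe ansatz exchange relation $S_{T_k\pi}=-\frac{1-v_k e^{ik_{\pi(k+1)}}}{1-v_k e^{ik_{\pi(k)}}}S_\pi$ for each adjacent transposition $T_k$ (swapping entries $k$ and $k+1$ of $\pi$), with $S_{\mathrm{id}}$ given, where $k_1,\dots,k_N$ are fixed complex momenta with $1-v_j e^{ik_m}\neq 0$ for all $j,m$. Then for all $(x_1,\dots,x_N)\in\mathbb{Z}^N$, $\sum_{\pi} S_\pi \exp\big(i\sum_{j=1}^N x_j k_{\pi(j)}\big) = S_{\mathrm{id}}\det\Big[\prod_{j=1}^{n-1}(1-v_j e^{ik_m})^{-1}\prod_{j=1}^{m-1}(1-v_j e^{ik_m})\,e^{ik_m x_n}\Big]_{1\le m,n\le N}$. -/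
open Finset

/-- Bethe ansatz determinant identity: if the amplitudes `S_π` satisfy the exchange
relation `S_{T_k π} = -((1 - v_k z_{π(k+1)})/(1 - v_k z_{π(k)})) S_π`, then the Bethe
sum over permutations equals `S_id` times the determinant.  Here everything is written
0-based: position `q` (0-based) corresponds to paper position `k = q+1`, and the rate
and momentum with 1-based paper index `j` are `v j` and `z j`. -/
theorem bethe_determinant (N : ℕ) (v : ℕ → ℝ) (hv : ∀ i, 0 < v i)
    (z : ℕ → ℂ) (hz0 : ∀ m, z m ≠ 0) (hz : ∀ j m, 1 - (v j : ℂ) * z m ≠ 0)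
    (S : Equiv.Perm (Fin N) → ℂ)
    (hS : ∀ (π : Equiv.Perm (Fin N)) (q : ℕ) (hq : q + 1 < N),
      S (π * Equiv.swap ⟨q, Nat.lt_of_succ_lt hq⟩ ⟨q + 1, hq⟩) =
        -((1 - (v (q + 1) : ℂ) * z ((π ⟨q + 1, hq⟩ : ℕ) + 1)) /
          (1 - (v (q + 1) : ℂ) * z ((π ⟨q, Nat.lt_of_succ_lt hq⟩ : ℕ) + 1))) * S π)
    (x : Fin N → ℤ) :
    ∑ π : Equiv.Perm (Fin N), S π * ∏ j : Fin N, z ((π j : ℕ) + 1) ^ x j =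
      S 1 * Matrix.det (Matrix.of fun m n : Fin N =>
        (∏ j ∈ range (n : ℕ), (1 - (v (j + 1) : ℂ) * z ((m : ℕ) + 1))⁻¹) *
        (∏ j ∈ range (m : ℕ), (1 - (v (j + 1) : ℂ) * z ((m : ℕ) + 1))) *
        z ((m : ℕ) + 1) ^ x n) := by
  classical
  set A : ℕ → ℕ → ℂ := fun n m =>
    (∏ j ∈ range n, (1 - (v (j + 1) : ℂ) * z (m + 1))⁻¹) *
    (∏ j ∈ range m, (1 - (v (j + 1) : ℂ) * z (m + 1))) with hA
  have hAone : ∀ n : ℕ, A n n = 1 := by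
    intro n
    rw [hA]
    simp only
    rw [Finset.prod_inv_distrib, inv_mul_cancel₀]
    exact Finset.prod_ne_zero_iff.2 fun j _ => hz (j + 1) (n + 1)
  have hAsucc : ∀ q m : ℕ, A (q + 1) m = (1 - (v (q + 1) : ℂ) * z (m + 1))⁻¹ * A q m := by
    intro q m
    rw [hA]
    simp only
    rw [Finset.prod_range_succ]
    ring
  have key : ∀ π : Equiv.Perm (Fin N),
      S π = S 1 * ((Equiv.Perm.sign π : ℤ) : ℂ) * ∏ n : Fin N, A (n : ℕ) ((π n : ℕ)) := by
    intro π
    rcases N with _ | n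
    · have : π = 1 := Subsingleton.elim _ _
      subst this
      simp
    · refine Submonoid.induction_of_closure_eq_top_right
        (Equiv.Perm.mclosure_swap_castSucc_succ n) π ?_ ?_
      · simp [hAone]
      · rintro π _ ⟨i, rfl⟩ ih
        beta_reduce
        set q : ℕ := (i : ℕ) with hqdef
        have hq : q + 1 < n + 1 := Nat.succ_lt_succ i.isLt
        have ha : Fin.castSucc i = (⟨q, Nat.lt_of_succ_lt hq⟩ : Fin (n + 1)) := rfl
        have hb : Fin.succ i = (⟨q + 1, hq⟩ : Fin (n + 1)) := rfl
        set a : Fin (n + 1) := ⟨q, Nat.lt_of_succ_lt hq⟩ with hadef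
        set b : Fin (n + 1) := ⟨q + 1, hq⟩ with hbdef
        have hab : a ≠ b := by
          simp [hadef, hbdef, Fin.ext_iff]
        rw [ha, hb]
        rw [hS π q hq]
        -- sign
        have hsign : ((Equiv.Perm.sign (π * Equiv.swap a b) : ℤ) : ℂ) =
            -((Equiv.Perm.sign π : ℤ) : ℂ) := by
          rw [Equiv.Perm.sign_mul, Equiv.Perm.sign_swap hab]
          push_cast
          ring
        -- product
        have happ : ∀ m : Fin (n + 1), (π * Equiv.swap a b) m = π (Equiv.swap a b m) :=
          fun m => rfl
        have hprod : (∏ m : Fin (n + 1), A (m : ℕ) (((π * Equiv.swap a b) m : ℕ))) =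
            (1 - (v (q + 1) : ℂ) * z ((π b : ℕ) + 1)) *
            (1 - (v (q + 1) : ℂ) * z ((π a : ℕ) + 1))⁻¹ *
            ∏ m : Fin (n + 1), A (m : ℕ) ((π m : ℕ)) := by
          have split : ∀ f : Fin (n + 1) → ℂ,
              ∏ m : Fin (n + 1), f m = f a * (f b * ∏ m ∈ (univ.erase a).erase b, f m) := by
            intro f
            rw [Finset.mul_prod_erase _ f (Finset.mem_erase.2 ⟨hab.symm, Finset.mem_univ b⟩),
              Finset.mul_prod_erase _ f (Finset.mem_univ a)]
          rw [split, split (fun m => A (m : ℕ) ((π m : ℕ)))]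
          have same : ∀ m ∈ (univ.erase a).erase b,
              A (m : ℕ) (((π * Equiv.swap a b) m : ℕ)) = A (m : ℕ) ((π m : ℕ)) := by
            intro m hm
            obtain ⟨hmb, hma⟩ := by
              simpa [Finset.mem_erase] using hm
            rw [happ, Equiv.swap_apply_of_ne_of_ne hma hmb]
          rw [Finset.prod_congr rfl same]
          have e1 : A (a : ℕ) (((π * Equiv.swap a b) a : ℕ)) = A q ((π b : ℕ)) := by
            rw [happ, Equiv.swap_apply_left]
          have e2 : A (b : ℕ) (((π * Equiv.swap a b) b : ℕ)) = A (q + 1) ((π a : ℕ)) := by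
            rw [happ, Equiv.swap_apply_right]
          rw [e1, e2]
          have e3 : A (a : ℕ) ((π a : ℕ)) = A q ((π a : ℕ)) := rfl
          have e4 : A (b : ℕ) ((π b : ℕ)) = A (q + 1) ((π b : ℕ)) := rfl
          rw [e3, e4, hAsucc, hAsucc]
          have h1 := hz (q + 1) ((π a : ℕ) + 1)
          have h2 := hz (q + 1) ((π b : ℕ) + 1)
          field_simp
        rw [ih, hsign, hprod]
        have h1 := hz (q + 1) ((π a : ℕ) + 1)
        rw [div_eq_mul_inv]
        ring
  rw [Matrix.det_apply', Finset.mul_sum]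
  refine Finset.sum_congr rfl fun π _ => ?_
  rw [key π]
  simp only [Matrix.of_apply]
  rw [show (∏ i : Fin N,
      (∏ j ∈ range (i : ℕ), (1 - (v (j + 1) : ℂ) * z ((π i : ℕ) + 1))⁻¹) *
      (∏ j ∈ range ((π i : ℕ)), (1 - (v (j + 1) : ℂ) * z ((π i : ℕ) + 1))) *
      z ((π i : ℕ) + 1) ^ x i) =
      (∏ i : Fin N, A (i : ℕ) ((π i : ℕ))) * ∏ i : Fin N, z ((π i : ℕ) + 1) ^ x i by
    rw [← Finset.prod_mul_distrib]]
  ring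
end

section
/- Consistency of the Bethe ansatz amplitudes (Yang–Baxter/braid relation): define for complex numbers $z,w$ with $1-v_kz\neq0$, $1-v_kw\neq0$ the scattering factor $s_k(z,w)=-\frac{1-v_k w}{1-v_k z}$. Then the amplitudes $S_\pi$ defined by $S_{T_k\pi}=s_k(z_{\pi(k)},z_{\pi(k+1)})S_\pi$ are well defined, i.e. for any two reduced words for the same permutation the product of scattering factors agrees; in particular the braid relation holds: applying the sequence of exchanges $T_k T_{k+1} T_k$ to any $\pi$ yields the same amplitude as applying $T_{k+1} T_k T_{k+1}$. -/
open Finset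

/-- The scattering factor `s_k(z,w) = -(1 - v_k w)/(1 - v_k z)`. -/
noncomputable def scat (v : ℕ → ℝ) (k : ℕ) (zz ww : ℂ) : ℂ :=
  -((1 - (v k : ℂ) * ww) / (1 - (v k : ℂ) * zz))

namespace BetheAux

lemma scat_braid (v : ℕ → ℝ) (q : ℕ) (x y w : ℂ)
    (h1x : 1 - (v (q+1) : ℂ) * x ≠ 0) (h2x : 1 - (v (q+2) : ℂ) * x ≠ 0)
    (h1y : 1 - (v (q+1) : ℂ) * y ≠ 0) (h2y : 1 - (v (q+2) : ℂ) * y ≠ 0) :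
    scat v (q+1) x y * scat v (q+2) x w * scat v (q+1) y w =
    scat v (q+2) y w * scat v (q+1) x w * scat v (q+2) x y := by
  unfold scat
  simp only [neg_mul, mul_neg, neg_neg, div_mul_div_comm, neg_inj]
  rw [div_eq_div_iff (by simp [*]) (by simp [*])]
  ring

/-- contribution of value `m` sitting at (0-based) position `p`. -/
noncomputable def G (v : ℕ → ℝ) (z : ℕ → ℂ) (N p m : ℕ) : ℂ :=
  ∏ k ∈ Finset.Ico (p + 1) N, (1 - (v k : ℂ) * z (m + 1))

lemma G_ne_zero (v : ℕ → ℝ) (z : ℕ → ℂ) (hz : ∀ j m, 1 - (v j : ℂ) * z m ≠ 0)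
    (N p m : ℕ) : G v z N p m ≠ 0 :=
  Finset.prod_ne_zero_iff.2 fun k _ => hz k (m + 1)

lemma G_succ (v : ℕ → ℝ) (z : ℕ → ℂ) {N q : ℕ} (hq : q + 1 < N) (m : ℕ) :
    G v z N q m = (1 - (v (q + 1) : ℂ) * z (m + 1)) * G v z N (q + 1) m := by
  unfold G
  rw [Finset.prod_eq_prod_Ico_succ_bot (by omega : q + 1 < N)]

/-- candidate amplitude (up to global normalization). -/
noncomputable def F (v : ℕ → ℝ) (z : ℕ → ℂ) (N : ℕ) (π : Equiv.Perm (Fin N)) : ℂ :=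
  ((Equiv.Perm.sign π : ℤ) : ℂ) * ∏ p : Fin N, G v z N p (π p)

lemma F_ne_zero (v : ℕ → ℝ) (z : ℕ → ℂ) (hz : ∀ j m, 1 - (v j : ℂ) * z m ≠ 0)
    (N : ℕ) (π : Equiv.Perm (Fin N)) : F v z N π ≠ 0 := by
  unfold F
  refine mul_ne_zero ?_ (Finset.prod_ne_zero_iff.2 fun p _ => G_ne_zero v z hz N p (π p))
  rcases Int.units_eq_one_or (Equiv.Perm.sign π) with h | h <;> simp [h]

lemma F_exchange (v : ℕ → ℝ) (z : ℕ → ℂ) (hz : ∀ j m, 1 - (v j : ℂ) * z m ≠ 0)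
    (N : ℕ) (π : Equiv.Perm (Fin N)) (q : ℕ) (hq : q + 1 < N) :
    F v z N (π * Equiv.swap ⟨q, Nat.lt_of_succ_lt hq⟩ ⟨q + 1, hq⟩) =
      scat v (q + 1) (z ((π ⟨q, Nat.lt_of_succ_lt hq⟩ : ℕ) + 1))
        (z ((π ⟨q + 1, hq⟩ : ℕ) + 1)) * F v z N π := by
  set a : Fin N := ⟨q, Nat.lt_of_succ_lt hq⟩
  set b : Fin N := ⟨q + 1, hq⟩
  have hab : a ≠ b := by simp [a, b, Fin.ext_iff]
  have hmem : b ∈ (Finset.univ : Finset (Fin N)).erase a :=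
    Finset.mem_erase.2 ⟨hab.symm, Finset.mem_univ b⟩
  have hsplit : ∀ f : Fin N → ℂ, ∏ p : Fin N, f p =
      f a * (f b * ∏ p ∈ ((Finset.univ : Finset (Fin N)).erase a).erase b, f p) := by
    intro f
    rw [Finset.mul_prod_erase _ f hmem, Finset.mul_prod_erase _ f (Finset.mem_univ a)]
  have hswap : ∀ p ∈ ((Finset.univ : Finset (Fin N)).erase a).erase b,
      G v z N p ((π * Equiv.swap a b) p) = G v z N p (π p) := by
    intro p hp
    rcases Finset.mem_erase.1 hp with ⟨hpb, hp'⟩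
    rcases Finset.mem_erase.1 hp' with ⟨hpa, -⟩
    rw [Equiv.Perm.mul_apply, Equiv.swap_apply_of_ne_of_ne hpa hpb]
  have hprod :
      (∏ p : Fin N, G v z N p ((π * Equiv.swap a b) p)) *
        (1 - (v (q + 1) : ℂ) * z ((π a : ℕ) + 1)) =
      (∏ p : Fin N, G v z N p (π p)) *
        (1 - (v (q + 1) : ℂ) * z ((π b : ℕ) + 1)) := by
    rw [hsplit (fun p => G v z N p ((π * Equiv.swap a b) p)),
      hsplit (fun p => G v z N p (π p)),
      Finset.prod_congr rfl hswap]
    have h1 : (π * Equiv.swap a b) a = π b := by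
      rw [Equiv.Perm.mul_apply, Equiv.swap_apply_left]
    have h2 : (π * Equiv.swap a b) b = π a := by
      rw [Equiv.Perm.mul_apply, Equiv.swap_apply_right]
    rw [h1, h2]
    have ga : (a : ℕ) = q := rfl
    have gb : (b : ℕ) = q + 1 := rfl
    have e1 : G v z N (a : ℕ) (π b) =
        (1 - (v (q + 1) : ℂ) * z ((π b : ℕ) + 1)) * G v z N (q + 1) (π b) := by
      rw [ga]; exact G_succ v z hq _
    have e2 : G v z N (a : ℕ) (π a) =
        (1 - (v (q + 1) : ℂ) * z ((π a : ℕ) + 1)) * G v z N (q + 1) (π a) := by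
      rw [ga]; exact G_succ v z hq _
    rw [e1, e2, gb]
    ring
  simp only [Equiv.Perm.mul_apply] at hprod
  have hsign : ((Equiv.Perm.sign (π * Equiv.swap a b) : ℤ) : ℂ) =
      -((Equiv.Perm.sign π : ℤ) : ℂ) := by
    rw [Equiv.Perm.sign_mul, Equiv.Perm.sign_swap hab]
    push_cast
    ring
  have hda := hz (q + 1) ((π a : ℕ) + 1)
  unfold F scat
  rw [hsign]
  field_simp
  simp only [Equiv.Perm.mul_apply]
  linear_combination (-1 : ℂ) * hprod

end BetheAux

/-- Well-definedness of the Bethe ansatz amplitudes: there is a unique family `S_π`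
extending a given `S_id` via the exchange relation (so the value is independent of the
chosen reduced word); in particular the braid relation holds: applying `T_q T_{q+1} T_q`
to any `π` yields the same amplitude (the same permutation and the same product of
scattering factors) as applying `T_{q+1} T_q T_{q+1}`.  Positions are 0-based, and
rates/momenta with 1-based paper index `j` are `v j`, `z j`. -/
theorem bethe_well_defined (N : ℕ) (v : ℕ → ℝ) (hv : ∀ i, 0 < v i)
    (z : ℕ → ℂ) (hz : ∀ j m, 1 - (v j : ℂ) * z m ≠ 0) (S₀ : ℂ) :
    (∃! S : Equiv.Perm (Fin N) → ℂ, S 1 = S₀ ∧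
      ∀ (π : Equiv.Perm (Fin N)) (q : ℕ) (hq : q + 1 < N),
        S (π * Equiv.swap ⟨q, Nat.lt_of_succ_lt hq⟩ ⟨q + 1, hq⟩) =
          scat v (q + 1) (z ((π ⟨q, Nat.lt_of_succ_lt hq⟩ : ℕ) + 1))
            (z ((π ⟨q + 1, hq⟩ : ℕ) + 1)) * S π) ∧
    (∀ (π : Equiv.Perm (Fin N)) (q : ℕ) (hq : q + 2 < N),
      letI a : Fin N := ⟨q, by omega⟩
      letI b : Fin N := ⟨q + 1, by omega⟩
      letI c : Fin N := ⟨q + 2, hq⟩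
      letI π₁ := π * Equiv.swap a b
      letI π₂ := π₁ * Equiv.swap b c
      letI π₁' := π * Equiv.swap b c
      letI π₂' := π₁' * Equiv.swap a b
      π₂ * Equiv.swap a b = π₂' * Equiv.swap b c ∧
      scat v (q + 1) (z ((π a : ℕ) + 1)) (z ((π b : ℕ) + 1)) *
        scat v (q + 2) (z ((π₁ b : ℕ) + 1)) (z ((π₁ c : ℕ) + 1)) *
        scat v (q + 1) (z ((π₂ a : ℕ) + 1)) (z ((π₂ b : ℕ) + 1)) =
      scat v (q + 2) (z ((π b : ℕ) + 1)) (z ((π c : ℕ) + 1)) *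
        scat v (q + 1) (z ((π₁' a : ℕ) + 1)) (z ((π₁' b : ℕ) + 1)) *
        scat v (q + 2) (z ((π₂' b : ℕ) + 1)) (z ((π₂' c : ℕ) + 1))) := by
  constructor
  · -- existence and uniqueness
    refine ⟨fun π => S₀ * BetheAux.F v z N π * (BetheAux.F v z N 1)⁻¹, ⟨?_, ?_⟩, ?_⟩
    · dsimp only
      rw [mul_assoc, mul_inv_cancel₀ (BetheAux.F_ne_zero v z hz N 1), mul_one]
    · intro π q hq
      dsimp only
      rw [BetheAux.F_exchange v z hz N π q hq]
      ring
    · -- uniqueness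
      rintro S' ⟨h0, hrel⟩
      funext π
      set S : Equiv.Perm (Fin N) → ℂ :=
        fun π => S₀ * BetheAux.F v z N π * (BetheAux.F v z N 1)⁻¹ with hS
      have hS0 : S 1 = S₀ := by
        simp only [hS]
        rw [mul_assoc, mul_inv_cancel₀ (BetheAux.F_ne_zero v z hz N 1), mul_one]
      have hSrel : ∀ (π : Equiv.Perm (Fin N)) (q : ℕ) (hq : q + 1 < N),
          S (π * Equiv.swap ⟨q, Nat.lt_of_succ_lt hq⟩ ⟨q + 1, hq⟩) =
            scat v (q + 1) (z ((π ⟨q, Nat.lt_of_succ_lt hq⟩ : ℕ) + 1))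
              (z ((π ⟨q + 1, hq⟩ : ℕ) + 1)) * S π := by
        intro π q hq
        simp only [hS]
        rw [BetheAux.F_exchange v z hz N π q hq]
        ring
      rcases N with _ | n
      · have h1 : π = 1 := Subsingleton.elim _ _
        rw [h1, h0]
        exact hS0.symm
      · -- Fin (n+1)
        have key : ∀ σ : Equiv.Perm (Fin (n + 1)),
            ∀ ρ : Equiv.Perm (Fin (n + 1)), S' ρ = S ρ → S' (ρ * σ) = S (ρ * σ) := by
          intro σ
          have hmem : σ ∈ Submonoid.closure
              (Set.range fun i : Fin n => Equiv.swap i.castSucc i.succ) := by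
            rw [Equiv.Perm.mclosure_swap_castSucc_succ]; trivial
          induction hmem using Submonoid.closure_induction with
          | mem x hx =>
            rcases hx with ⟨i, rfl⟩
            intro ρ hρ
            dsimp only
            have hq : (i : ℕ) + 1 < n + 1 := by omega
            have hc : (Fin.castSucc i) = (⟨(i : ℕ), Nat.lt_of_succ_lt hq⟩ : Fin (n + 1)) := rfl
            have hs : (Fin.succ i) = (⟨(i : ℕ) + 1, hq⟩ : Fin (n + 1)) := rfl
            rw [hc, hs, hrel ρ i hq, hSrel ρ i hq, hρ]
          | one => intro ρ hρ; rw [mul_one, hρ]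
          | mul x y _ _ hx hy =>
            intro ρ hρ
            rw [← mul_assoc]
            exact hy _ (hx _ hρ)
        have h1 := key π 1 (by rw [h0, hS0])
        rwa [one_mul] at h1
  · -- braid relation
    intro π q hq
    refine ⟨?_, ?_⟩
    · set a : Fin N := ⟨q, by omega⟩
      set b : Fin N := ⟨q + 1, by omega⟩
      set c : Fin N := ⟨q + 2, hq⟩
      have hab : a ≠ b := by simp [a, b, Fin.ext_iff]
      have hbc : b ≠ c := by simp [b, c, Fin.ext_iff]
      have hac : a ≠ c := by simp [a, c, Fin.ext_iff]
      have L : Equiv.swap a b * Equiv.swap b c * Equiv.swap a b = Equiv.swap a c := by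
        rw [Equiv.swap_comm a b, Equiv.swap_comm b c,
          Equiv.swap_mul_swap_mul_swap hbc.symm hac.symm]
      have R : Equiv.swap b c * Equiv.swap a b * Equiv.swap b c = Equiv.swap c a :=
        Equiv.swap_mul_swap_mul_swap hab hac
      have key : Equiv.swap a b * Equiv.swap b c * Equiv.swap a b =
          Equiv.swap b c * Equiv.swap a b * Equiv.swap b c := by
        rw [L, R, Equiv.swap_comm]
      rw [mul_assoc, mul_assoc, mul_assoc, mul_assoc, ← mul_assoc (Equiv.swap a b),
        ← mul_assoc (Equiv.swap b c), key]
    · simp only [Equiv.Perm.mul_apply]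
      simp [Equiv.swap_apply_def, Fin.ext_iff]
      exact BetheAux.scat_braid v q _ _ _ (hz _ _) (hz _ _) (hz _ _) (hz _ _)
end

section
/- Define $P_{\mathbf{k}}(x_1,\dots,x_N)=\prod_{i=1}^N v_i^{x_i}\det\big[\prod_{j=1}^{n-1}(1-v_jz_m)^{-1}\prod_{j=1}^{m-1}(1-v_jz_m)\,z_m^{x_n}\big]_{m,n}$ where $z_m=e^{ik_m}$. Then $P_{\mathbf{k}}$ is an eigenfunction of the free evolution operator: $\sum_{i=1}^N v_i\,P_{\mathbf{k}}(x_1,\dots,x_i-1,\dots,x_N)-\big(\sum_{i=1}^N v_i\big)P_{\mathbf{k}}(x_1,\dots,x_N) = -E_{\mathbf{k}}\,P_{\mathbf{k}}(x_1,\dots,x_N)$ with eigenvalue $E_{\mathbf{k}}=\sum_{j=1}^N(v_j-z_j^{-1})$, for all $(x_1,\dots,x_N)\in\mathbb{Z}^N$. -/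
open Finset

/-- The Bethe determinant eigenfunction
`P_k(x) = ∏ v_i^{x_i} · det[ ∏_{j<n}(1-v_j z_m)⁻¹ ∏_{j<m}(1-v_j z_m) z_m^{x_n} ]`,
written 0-based in `m,n`; rates/momenta with 1-based paper index `j` are `v j`, `z j`. -/
noncomputable def Pk (N : ℕ) (v : ℕ → ℝ) (z : ℕ → ℂ) (x : Fin N → ℤ) : ℂ :=
  (∏ i : Fin N, ((v ((i : ℕ) + 1) : ℂ)) ^ x i) *
    Matrix.det (Matrix.of fun m n : Fin N =>
      (∏ j ∈ range (n : ℕ), (1 - (v (j + 1) : ℂ) * z ((m : ℕ) + 1))⁻¹) *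
      (∏ j ∈ range (m : ℕ), (1 - (v (j + 1) : ℂ) * z ((m : ℕ) + 1))) *
      z ((m : ℕ) + 1) ^ x n)

lemma det_sum_updateCol {N : ℕ} (A : Matrix (Fin N) (Fin N) ℂ) (d : Fin N → ℂ) :
    ∑ n : Fin N, (A.updateCol n (fun m => d m * A m n)).det
      = (∑ m : Fin N, d m) * A.det := by
  simp only [Matrix.det_apply]
  rw [Finset.sum_comm, Finset.mul_sum]
  refine Finset.sum_congr rfl fun σ _ => ?_
  have key : ∀ n : Fin N, ∏ i, (A.updateCol n (fun m => d m * A m n)) (σ i) i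
      = d (σ n) * ∏ i, A (σ i) i := by
    intro n
    have h : ∀ i : Fin N, (A.updateCol n (fun m => d m * A m n)) (σ i) i
        = (if i = n then d (σ i) else 1) * A (σ i) i := by
      intro i
      rw [Matrix.updateCol_apply]
      by_cases h : i = n <;> simp [h]
    rw [Finset.prod_congr rfl fun i _ => h i, Finset.prod_mul_distrib]
    congr 1
    simp
  simp only [key]
  rw [← Finset.smul_sum, ← Finset.sum_mul, Equiv.sum_comp σ d, mul_smul_comm]

theorem bethe_eigenfunction (N : ℕ) (v : ℕ → ℝ) (hv : ∀ i, 0 < v i)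
    (z : ℕ → ℂ) (hz0 : ∀ m, z m ≠ 0) (hz : ∀ j m, 1 - (v j : ℂ) * z m ≠ 0)
    (x : Fin N → ℤ) :
    ∑ i : Fin N, (v ((i : ℕ) + 1) : ℂ) * Pk N v z (Function.update x i (x i - 1)) -
      (∑ i : Fin N, (v ((i : ℕ) + 1) : ℂ)) * Pk N v z x =
    -(∑ j : Fin N, ((v ((j : ℕ) + 1) : ℂ) - (z ((j : ℕ) + 1))⁻¹)) * Pk N v z x := by
  set A : Matrix (Fin N) (Fin N) ℂ := Matrix.of fun m n : Fin N =>
      (∏ j ∈ range (n : ℕ), (1 - (v (j + 1) : ℂ) * z ((m : ℕ) + 1))⁻¹) *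
      (∏ j ∈ range (m : ℕ), (1 - (v (j + 1) : ℂ) * z ((m : ℕ) + 1))) *
      z ((m : ℕ) + 1) ^ x n with hA
  have hPk : Pk N v z x = (∏ j : Fin N, ((v ((j : ℕ) + 1) : ℂ)) ^ x j) * A.det := rfl
  have key : ∀ i : Fin N, (v ((i:ℕ)+1) : ℂ) * Pk N v z (Function.update x i (x i - 1))
      = (∏ j : Fin N, ((v ((j : ℕ) + 1) : ℂ)) ^ x j) *
        (A.updateCol i (fun m => (z ((m:ℕ)+1))⁻¹ * A m i)).det := by
    intro i
    have hv' : ((v ((i:ℕ)+1) : ℂ)) ≠ 0 := by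
      exact_mod_cast (hv _).ne'
    have hprod : ∏ j : Fin N, ((v ((j : ℕ) + 1) : ℂ)) ^ (Function.update x i (x i - 1) j)
        = (v ((i:ℕ)+1) : ℂ)⁻¹ * ∏ j : Fin N, ((v ((j : ℕ) + 1) : ℂ)) ^ x j := by
      rw [← Finset.mul_prod_erase univ _ (mem_univ i),
          ← Finset.mul_prod_erase univ (fun j : Fin N => ((v ((j : ℕ) + 1) : ℂ)) ^ x j)
            (mem_univ i)]
      rw [Finset.prod_congr rfl (fun j hj => by
        rw [Function.update_of_ne (Finset.ne_of_mem_erase hj)])]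
      rw [Function.update_self, zpow_sub_one₀ hv']
      ring
    have hdet : (Matrix.of fun m n : Fin N =>
        (∏ j ∈ range (n : ℕ), (1 - (v (j + 1) : ℂ) * z ((m : ℕ) + 1))⁻¹) *
        (∏ j ∈ range (m : ℕ), (1 - (v (j + 1) : ℂ) * z ((m : ℕ) + 1))) *
        z ((m : ℕ) + 1) ^ (Function.update x i (x i - 1) n))
        = A.updateCol i (fun m => (z ((m:ℕ)+1))⁻¹ * A m i) := by
      ext m n
      by_cases h : n = i
      · subst h
        simp only [Matrix.updateCol_apply, if_pos rfl, hA, Matrix.of_apply,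
          Function.update_self, zpow_sub_one₀ (hz0 _), if_true]
        ring
      · simp [Matrix.updateCol_apply, h, hA, Function.update_of_ne h]
    rw [Pk, hprod, hdet]
    field_simp
  rw [Finset.sum_congr rfl (fun i _ => key i), ← Finset.mul_sum, det_sum_updateCol, hPk,
    Finset.sum_sub_distrib]
  ring
end

section
/- The Bethe determinant eigenfunction satisfies the boundary condition encoding the exclusion interaction with particle-dependent rates: with $P_{\mathbf{k}}(x_1,\dots,x_N)=\prod_i v_i^{x_i}\det\big[\prod_{j<n}(1-v_jz_m)^{-1}\prod_{j<m}(1-v_jz_m)\,z_m^{x_n}\big]_{m,n}$, for every $1\le \kappa\le N-1$ and all integer arguments, $v_{\kappa+1}\,P_{\mathbf{k}}(\dots,x_\kappa,x_\kappa,\dots)=v_\kappa\,P_{\mathbf{k}}(\dots,x_\kappa,x_\kappa+1,\dots)$, where the two displayed arguments are in positions $\kappa$ and $\kappa+1$. -/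
open Finset

theorem bethe_boundary_condition (N : ℕ) (v : ℕ → ℝ) (hv : ∀ i, 0 < v i)
    (z : ℕ → ℂ) (hz0 : ∀ m, z m ≠ 0) (hz : ∀ j m, 1 - (v j : ℂ) * z m ≠ 0)
    (q : ℕ) (hq : q + 1 < N) (x : Fin N → ℤ)
    (hx : x ⟨q + 1, hq⟩ = x ⟨q, Nat.lt_of_succ_lt hq⟩) :
    (v (q + 2) : ℂ) * Pk N v z x =
      (v (q + 1) : ℂ) *
        Pk N v z (Function.update x ⟨q + 1, hq⟩ (x ⟨q, Nat.lt_of_succ_lt hq⟩ + 1)) := by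
  set p : Fin N := ⟨q, Nat.lt_of_succ_lt hq⟩ with hp
  set k : Fin N := ⟨q + 1, hq⟩ with hk
  have hpk : p ≠ k := by
    simp only [hp, hk, Fin.mk.injEq, ne_eq]
    omega
  set x' : Fin N → ℤ := Function.update x k (x p + 1) with hx'
  have hx'k : x' k = x p + 1 := by simp [hx']
  have hx'n : ∀ n : Fin N, n ≠ k → x' n = x n := fun n hn => Function.update_of_ne hn _ _
  set A : Matrix (Fin N) (Fin N) ℂ := Matrix.of fun m n : Fin N =>
      (∏ j ∈ range (n : ℕ), (1 - (v (j + 1) : ℂ) * z ((m : ℕ) + 1))⁻¹) *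
      (∏ j ∈ range (m : ℕ), (1 - (v (j + 1) : ℂ) * z ((m : ℕ) + 1))) *
      z ((m : ℕ) + 1) ^ x n with hA
  set A' : Matrix (Fin N) (Fin N) ℂ := Matrix.of fun m n : Fin N =>
      (∏ j ∈ range (n : ℕ), (1 - (v (j + 1) : ℂ) * z ((m : ℕ) + 1))⁻¹) *
      (∏ j ∈ range (m : ℕ), (1 - (v (j + 1) : ℂ) * z ((m : ℕ) + 1))) *
      z ((m : ℕ) + 1) ^ x' n with hA'
  -- the "same column twice" column
  set c : Fin N → ℂ := fun m => A m p with hc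
  -- column k of A
  have hcol1 : ∀ m, A m k = (1 - (v (q + 1) : ℂ) * z ((m : ℕ) + 1))⁻¹ * c m := by
    intro m
    simp only [hA, hc, Matrix.of_apply, hx]
    simp only [hk, hp]
    rw [prod_range_succ]
    ring
  -- column k of A'
  have hcol2 : ∀ m, A' m k =
      (1 - (v (q + 1) : ℂ) * z ((m : ℕ) + 1))⁻¹ * z ((m : ℕ) + 1) * c m := by
    intro m
    simp only [hA', hA, hc, Matrix.of_apply, hx'k]
    simp only [hk, hp]
    rw [prod_range_succ, zpow_add_one₀ (hz0 _)]
    ring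
  have hAA' : A' = A.updateCol k (fun m => A' m k) := by
    ext m n
    by_cases hn : n = k
    · subst hn; simp [Matrix.updateCol_apply]
    · simp [Matrix.updateCol_apply, hn, hA', hA, hx'n n hn]
  -- c1 = u • c2 + c pointwise
  have hlin : (fun m => A m k) =
      (v (q + 1) : ℂ) • (fun m => A' m k) + c := by
    funext m
    have h1 : (1 - (v (q + 1) : ℂ) * z ((m : ℕ) + 1)) ≠ 0 := hz _ _
    simp only [Pi.add_apply, Pi.smul_apply, smul_eq_mul, hcol1, hcol2]
    field_simp
    ring
  -- determinant identity
  have hdet : A.det = (v (q + 1) : ℂ) * A'.det := by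
    have h0 : (A.updateCol k c).det = 0 := by
      apply Matrix.det_zero_of_column_eq hpk
      intro m
      rw [Matrix.updateCol_apply, Matrix.updateCol_apply]
      simp [hpk, Ne.symm (by exact fun h => hpk h.symm : k ≠ p), hc]
    calc A.det = (A.updateCol k (fun m => A m k)).det := by
            rw [Matrix.updateCol_eq_self]
      _ = (A.updateCol k ((v (q + 1) : ℂ) • (fun m => A' m k) + c)).det := by rw [hlin]
      _ = (v (q + 1) : ℂ) * (A.updateCol k (fun m => A' m k)).det
            + (A.updateCol k c).det := by
            rw [Matrix.det_updateCol_add, Matrix.det_updateCol_smul]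
      _ = (v (q + 1) : ℂ) * A'.det := by rw [h0, ← hAA']; ring
  -- prefactor identity
  have hpre : (∏ i : Fin N, ((v ((i : ℕ) + 1) : ℂ)) ^ x' i)
      = (v (q + 2) : ℂ) * ∏ i : Fin N, ((v ((i : ℕ) + 1) : ℂ)) ^ x i := by
    rw [← Finset.mul_prod_erase univ _ (mem_univ k),
        ← Finset.mul_prod_erase univ (fun i : Fin N => ((v ((i : ℕ) + 1) : ℂ)) ^ x i)
          (mem_univ k)]
    have herase : ∏ i ∈ univ.erase k, ((v ((i : ℕ) + 1) : ℂ)) ^ x' i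
        = ∏ i ∈ univ.erase k, ((v ((i : ℕ) + 1) : ℂ)) ^ x i := by
      refine Finset.prod_congr rfl fun i hi => ?_
      rw [hx'n i (Finset.ne_of_mem_erase hi)]
    have hvne : ((v (q + 2) : ℂ)) ≠ 0 := by
      exact_mod_cast ne_of_gt (hv (q + 2))
    have hkval : ((k : ℕ) + 1) = q + 2 := by simp [hk]
    rw [herase, hx'k, hkval, ← hx, hk]
    rw [zpow_add_one₀ hvne]
    ring
  simp only [Pk, ← hA, ← hA', ← hx', hpre, hdet]
  ring
end

section
/- Let $P(\mathbf{x}|\mathbf{y};t)=\prod_{i=1}^N e^{-tv_i}v_i^{x_i-y_i}\det\big[F_{m,n}(x_n-y_m,t)\big]_{1\le m,n\le N}$ with $F_{k,l}$ the contour-integral functions. Then $P$ satisfies the free evolution equation $\frac{d}{dt}P(\mathbf{x}|\mathbf{y};t)=\sum_{i=1}^N v_i\,P(x_1,\dots,x_i-1,\dots,x_N|\mathbf{y};t)-\big(\sum_i v_i\big)P(\mathbf{x}|\mathbf{y};t)$ for all $\mathbf{x},\mathbf{y}\in\mathbb{Z}^N$ and $t>0$. -/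
open Finset Metric

/-- The determinant formula for the conditional probability:
`P(x|y;t) = ∏_i e^{-t v_i} v_i^{x_i - y_i} · det[F_{m,n}(x_n - y_m, t)]`,
written 0-based in `m,n` (particle `i` (0-based) has rate `v (i+1)`). -/
noncomputable def Pc (N : ℕ) (v : ℕ → ℝ) (ε : ℝ) (y x : Fin N → ℤ) (t : ℝ) : ℂ :=
  (∏ i : Fin N,
      Complex.exp (-(t * v ((i : ℕ) + 1) : ℝ)) * (v ((i : ℕ) + 1) : ℂ) ^ (x i - y i)) *
    Matrix.det (Matrix.of fun m n : Fin N =>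
      F v ε ((m : ℕ) + 1) ((n : ℕ) + 1) (x n - y m) t)

lemma circle_key (ε : ℝ) (hε : 0 < ε) (g : ℂ → ℂ)
    (hg : ContinuousOn g (Metric.sphere (0:ℂ) ε)) (t : ℝ) :
    HasDerivAt (fun s : ℝ => ∮ z in C(0, ε), Complex.exp ((s:ℂ) / z) * g z)
      (∮ z in C(0, ε), Complex.exp ((t:ℂ) / z) * g z / z) t := by
  obtain ⟨C, hC⟩ := (isCompact_sphere (0:ℂ) ε).exists_bound_of_continuousOn hg
  have hgc : Continuous fun θ : ℝ => g (circleMap 0 ε θ) :=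
    hg.comp_continuous (continuous_circleMap 0 ε) (circleMap_mem_sphere 0 hε.le)
  have hne : ∀ θ : ℝ, circleMap 0 ε θ ≠ 0 := fun θ => circleMap_ne_center hε.ne'
  have habs : ∀ θ : ℝ, ‖circleMap 0 ε θ‖ = ε := fun θ => by
    simpa [abs_of_pos hε] using norm_circleMap_zero ε θ
  have hcont : ∀ s : ℝ, Continuous fun θ : ℝ =>
      deriv (circleMap 0 ε) θ • (Complex.exp ((s:ℂ) / circleMap 0 ε θ) * g (circleMap 0 ε θ)) := by
    intro s
    simp only [deriv_circleMap]
    exact ((continuous_circleMap 0 ε).mul continuous_const).smul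
      (((Complex.continuous_exp.comp (continuous_const.div (continuous_circleMap 0 ε) hne))).mul hgc)
  have hcont' : Continuous fun θ : ℝ =>
      deriv (circleMap 0 ε) θ • (Complex.exp ((t:ℂ) / circleMap 0 ε θ) * g (circleMap 0 ε θ) / circleMap 0 ε θ) := by
    simp only [deriv_circleMap]
    exact ((continuous_circleMap 0 ε).mul continuous_const).smul
      ((((Complex.continuous_exp.comp (continuous_const.div (continuous_circleMap 0 ε) hne))).mul hgc).div
        (continuous_circleMap 0 ε) hne)
  simp only [circleIntegral]
  refine (intervalIntegral.hasDerivAt_integral_of_dominated_loc_of_deriv_le (𝕜 := ℝ)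
    (F' := fun (s : ℝ) (θ : ℝ) => deriv (circleMap 0 ε) θ •
      (Complex.exp ((s:ℂ) / circleMap 0 ε θ) * g (circleMap 0 ε θ) / circleMap 0 ε θ))
    (bound := fun _ => Real.exp ((|t| + 1) / ε) * C)
    (Metric.ball_mem_nhds t one_pos) ?_ ?_ ?_ ?_ ?_ ?_).2
  · exact Filter.Eventually.of_forall fun s => (hcont s).aestronglyMeasurable
  · exact (hcont t).intervalIntegrable _ _
  · exact hcont'.aestronglyMeasurable
  · refine Filter.Eventually.of_forall fun θ _ s hs => ?_
    have hz := habs θ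
    have h1 : ‖deriv (circleMap 0 ε) θ •
        (Complex.exp ((s:ℂ) / circleMap 0 ε θ) * g (circleMap 0 ε θ) / circleMap 0 ε θ)‖
        = ε * (‖Complex.exp ((s:ℂ) / circleMap 0 ε θ)‖ * ‖g (circleMap 0 ε θ)‖ / ε) := by
      simp [deriv_circleMap, norm_smul, norm_mul, hz, norm_div, abs_of_pos hε]
    have h4 : ε * (‖Complex.exp ((s:ℂ) / circleMap 0 ε θ)‖ * ‖g (circleMap 0 ε θ)‖ / ε)
        = ‖Complex.exp ((s:ℂ) / circleMap 0 ε θ)‖ * ‖g (circleMap 0 ε θ)‖ := by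
      field_simp
    rw [h1, h4]
    have h2 : ‖Complex.exp ((s:ℂ) / circleMap 0 ε θ)‖ ≤ Real.exp ((|t| + 1) / ε) := by
      rw [Complex.norm_exp]
      apply Real.exp_le_exp.2
      refine (Complex.re_le_norm _).trans ?_
      rw [norm_div, Complex.norm_real, Real.norm_eq_abs, hz]
      gcongr
      have hd := mem_ball_iff_norm.1 hs
      have := abs_sub_abs_le_abs_sub s t
      simp only [Real.norm_eq_abs] at hd
      linarith
    have h3 : ‖g (circleMap 0 ε θ)‖ ≤ C := hC _ (circleMap_mem_sphere 0 hε.le θ)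
    exact mul_le_mul h2 h3 (norm_nonneg _) (Real.exp_nonneg _)
  · exact intervalIntegrable_const
  · refine Filter.Eventually.of_forall fun θ _ s hs => ?_
    set z := circleMap 0 ε θ with hzdef
    have h1 : HasDerivAt (fun w : ℂ => Complex.exp (w * z⁻¹))
        (Complex.exp ((s:ℂ) * z⁻¹) * z⁻¹) (s : ℂ) := by
      simpa using ((hasDerivAt_id ((s:ℝ) : ℂ)).mul_const z⁻¹).cexp
    have h2 := ((h1.comp_ofReal).mul_const (g z)).const_mul (deriv (circleMap 0 ε) θ)
    convert h2 using 1
    all_goals beta_reduce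
    all_goals first
      | (funext s'; simp [smul_eq_mul, div_eq_mul_inv])
      | (simp only [smul_eq_mul, div_eq_mul_inv]; ring)
      | rfl

lemma hasDerivAt_F (v : ℕ → ℝ) (vmax : ℝ) (hv : ∀ i, 0 < v i) (hvm : ∀ i, v i ≤ vmax)
    (ε : ℝ) (hε : 0 < ε) (hεm : ε < 1 / vmax) (k l : ℕ) (x : ℤ) (t : ℝ) :
    HasDerivAt (fun s => F v ε k l x s) (F v ε k l (x - 1) t) t := by
  have hvm0 : 0 < vmax := (hv 0).trans_le (hvm 0)
  have hsz : ∀ z ∈ Metric.sphere (0:ℂ) ε, z ≠ 0 := fun z hz => ne_of_mem_sphere hz hε.ne'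
  have hnv : ∀ (i : ℕ), ∀ z ∈ Metric.sphere (0:ℂ) ε, (1 - (v i : ℂ) * z) ≠ 0 := by
    intro i z hz
    have habs : ‖(v i : ℂ) * z‖ < 1 := by
      rw [norm_mul, Complex.norm_real, Real.norm_eq_abs, abs_of_pos (hv i)]
      have hzabs : ‖z‖ = ε := by simpa [Complex.dist_eq] using hz
      rw [hzabs]
      calc v i * ε ≤ vmax * ε := by nlinarith [hε, hvm i]
        _ < 1 := by rw [lt_div_iff₀ hvm0] at hεm; nlinarith
    intro h
    rw [sub_eq_zero] at h
    rw [← h] at habs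
    simp at habs
  set g : ℂ → ℂ := fun z => z ^ (x - 1) *
      (∏ i ∈ range (l - 1), (1 - (v (i + 1) : ℂ) * z)⁻¹) *
      ∏ i ∈ range (k - 1), (1 - (v (i + 1) : ℂ) * z) with hg
  have hgc : ContinuousOn g (Metric.sphere (0:ℂ) ε) := by
    apply ContinuousOn.mul
    apply ContinuousOn.mul
    · intro z hz
      exact (continuousAt_zpow₀ z (x - 1) (Or.inl (hsz z hz))).continuousWithinAt
    · apply continuousOn_finset_prod
      intro i _
      exact ((continuous_const.sub (continuous_mul_left _)).continuousOn).inv₀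
        fun z hz => hnv (i + 1) z hz
    · apply continuousOn_finset_prod
      intro i _
      exact (continuous_const.sub (continuous_mul_left _)).continuousOn
  have key := (circle_key ε hε g hgc t).const_mul ((2 * Real.pi * Complex.I)⁻¹ : ℂ)
  have e1 : (fun s : ℝ => (2 * Real.pi * Complex.I)⁻¹ *
      ∮ z in C(0, ε), Complex.exp ((s:ℂ) / z) * g z) = fun s => F v ε k l x s := by
    funext s
    unfold F
    congr 1
    apply circleIntegral.integral_congr hε.le
    intro z _
    simp only [hg]
    ring
  have e2 : (2 * Real.pi * Complex.I)⁻¹ *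
      (∮ z in C(0, ε), Complex.exp ((t:ℂ) / z) * g z / z) = F v ε k l (x - 1) t := by
    unfold F
    congr 1
    apply circleIntegral.integral_congr hε.le
    intro z hz
    simp only [hg]
    rw [zpow_sub_one₀ (hsz z hz) (x - 1)]
    simp only [div_eq_mul_inv]
    ring
  rw [e1, e2] at key
  exact key

lemma det_deriv {n : ℕ} (A : ℝ → Matrix (Fin n) (Fin n) ℂ) (A' : Matrix (Fin n) (Fin n) ℂ)
    (t : ℝ) (h : ∀ i j, HasDerivAt (fun s => A s i j) (A' i j) t) :
    HasDerivAt (fun s => (A s).det)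
      (∑ j, ((A t).updateCol j (fun i => A' i j)).det) t := by
  have h1 : HasDerivAt
      (fun s => ∑ σ : Equiv.Perm (Fin n), ((Equiv.Perm.sign σ : ℤ) : ℂ) * ∏ i, A s (σ i) i)
      (∑ σ : Equiv.Perm (Fin n), ((Equiv.Perm.sign σ : ℤ) : ℂ) *
        ∑ j, (∏ i ∈ univ.erase j, A t (σ i) i) • A' (σ j) j) t :=
    HasDerivAt.fun_sum fun σ _ =>
      (HasDerivAt.fun_finsetProd fun i _ => h (σ i) i).const_mul _
  convert h1 using 1
  · funext s
    rw [Matrix.det_apply']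
  · simp only [smul_eq_mul, Finset.mul_sum]
    rw [Finset.sum_comm]
    refine Finset.sum_congr rfl fun j _ => ?_
    rw [Matrix.det_apply']
    refine Finset.sum_congr rfl fun σ _ => ?_
    rw [← Finset.mul_prod_erase univ
      (fun i => ((A t).updateCol j fun i' => A' i' j) (σ i) i) (Finset.mem_univ j)]
    have he : ∏ i ∈ univ.erase j, ((A t).updateCol j fun i' => A' i' j) (σ i) i
        = ∏ i ∈ univ.erase j, A t (σ i) i := by
      refine Finset.prod_congr rfl fun i hi => ?_
      rw [Matrix.updateCol_apply, if_neg (Finset.mem_erase.1 hi).1]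
    rw [he, Matrix.updateCol_apply, if_pos rfl]
    ring

theorem master_equation
    (N : ℕ) (v : ℕ → ℝ) (vmax : ℝ) (hv : ∀ i, 0 < v i) (hvm : ∀ i, v i ≤ vmax)
    (ε : ℝ) (hε : 0 < ε) (hεm : ε < 1 / vmax)
    (y x : Fin N → ℤ) (t : ℝ) (ht : 0 < t) :
    HasDerivAt (fun s : ℝ => Pc N v ε y x s)
      (∑ i : Fin N, (v ((i : ℕ) + 1) : ℂ) * Pc N v ε y (Function.update x i (x i - 1)) t -
        (∑ i : Fin N, (v ((i : ℕ) + 1) : ℂ)) * Pc N v ε y x t) t := by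
  classical
  set A : ℝ → Matrix (Fin N) (Fin N) ℂ := fun s => Matrix.of fun m n : Fin N =>
      F v ε ((m : ℕ) + 1) ((n : ℕ) + 1) (x n - y m) s with hA
  set A' : Matrix (Fin N) (Fin N) ℂ := Matrix.of fun m n : Fin N =>
      F v ε ((m : ℕ) + 1) ((n : ℕ) + 1) (x n - y m - 1) t with hA'
  set c : ℝ → ℂ := fun s => ∏ i : Fin N,
      Complex.exp (-(s * v ((i : ℕ) + 1) : ℝ)) * (v ((i : ℕ) + 1) : ℂ) ^ (x i - y i) with hc
  have hvne : ∀ i : ℕ, ((v i : ℂ)) ≠ 0 := fun i => by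
    exact_mod_cast Complex.ofReal_ne_zero.2 (hv i).ne'
  -- derivative of the determinant
  have hdet : HasDerivAt (fun s => (A s).det)
      (∑ j, ((A t).updateCol j (fun i => A' i j)).det) t := by
    refine det_deriv A A' t fun m n => ?_
    simpa [hA, hA'] using hasDerivAt_F v vmax hv hvm ε hε hεm ((m : ℕ) + 1) ((n : ℕ) + 1) (x n - y m) t
  -- derivative of the prefactor
  have hcder : HasDerivAt c (-(∑ i : Fin N, (v ((i : ℕ) + 1) : ℂ)) * c t) t := by
    have hf : ∀ i : Fin N, HasDerivAt
        (fun s : ℝ => Complex.exp (-(s * v ((i : ℕ) + 1) : ℝ)) * (v ((i : ℕ) + 1) : ℂ) ^ (x i - y i))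
        ((-(v ((i : ℕ) + 1)) : ℂ) * Complex.exp (-(t * v ((i : ℕ) + 1) : ℝ)) *
          (v ((i : ℕ) + 1) : ℂ) ^ (x i - y i)) t := by
      intro i
      have h1 : HasDerivAt (fun w : ℂ => Complex.exp (w * (-(v ((i : ℕ) + 1)) : ℂ)))
          (Complex.exp ((t : ℂ) * (-(v ((i : ℕ) + 1)) : ℂ)) * (-(v ((i : ℕ) + 1)) : ℂ)) (t : ℂ) := by
        simpa using ((hasDerivAt_id ((t : ℝ) : ℂ)).mul_const (-(v ((i : ℕ) + 1)) : ℂ)).cexp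
      have h2 := (h1.comp_ofReal).mul_const ((v ((i : ℕ) + 1) : ℂ) ^ (x i - y i))
      convert h2 using 1
      · rfl
      · funext s
        congr 1
        congr 1
        push_cast
        ring
      · beta_reduce
        rw [show (-((t * v ((i : ℕ) + 1) : ℝ) : ℂ)) = (t : ℂ) * (-((v ((i : ℕ) + 1) : ℝ) : ℂ)) by
          push_cast; ring]
        ring
    have h := HasDerivAt.fun_finsetProd (u := univ) (fun i _ => hf i)
    convert h using 1
    rfl
    have hterm : ∀ i ∈ (univ : Finset (Fin N)),
        (∏ j ∈ univ.erase i, (Complex.exp (-(t * v ((j : ℕ) + 1) : ℝ)) *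
            (v ((j : ℕ) + 1) : ℂ) ^ (x j - y j))) •
          ((-(v ((i : ℕ) + 1)) : ℂ) * Complex.exp (-(t * v ((i : ℕ) + 1) : ℝ)) *
            (v ((i : ℕ) + 1) : ℂ) ^ (x i - y i))
        = -((v ((i : ℕ) + 1) : ℂ) * c t) := by
      intro i _
      rw [smul_eq_mul, hc]
      beta_reduce
      rw [← Finset.mul_prod_erase univ
        (fun j : Fin N => Complex.exp (-(t * v ((j : ℕ) + 1) : ℝ)) *
          (v ((j : ℕ) + 1) : ℂ) ^ (x j - y j)) (Finset.mem_univ i)]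
      ring
    rw [Finset.sum_congr rfl hterm, Finset.sum_neg_distrib, ← Finset.sum_mul, neg_mul]
  -- key column identity
  have hkey : ∀ n : Fin N, (v ((n : ℕ) + 1) : ℂ) * Pc N v ε y (Function.update x n (x n - 1)) t
      = c t * ((A t).updateCol n fun m => A' m n).det := by
    intro n
    have hM : (Matrix.of fun m n' : Fin N =>
        F v ε ((m : ℕ) + 1) ((n' : ℕ) + 1) (Function.update x n (x n - 1) n' - y m) t)
        = (A t).updateCol n (fun m => A' m n) := by
      ext m n'
      rw [Matrix.updateCol_apply]
      by_cases hn : n' = n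
      · subst hn
        simp only [Matrix.of_apply, Function.update_self, if_pos rfl, hA']
        rw [show x n' - 1 - y m = x n' - y m - 1 by ring]
        simp
      · simp only [Matrix.of_apply, Function.update_of_ne hn, if_neg hn, hA]
    have hcc : (v ((n : ℕ) + 1) : ℂ) * (∏ i : Fin N,
        Complex.exp (-(t * v ((i : ℕ) + 1) : ℝ)) *
          (v ((i : ℕ) + 1) : ℂ) ^ (Function.update x n (x n - 1) i - y i)) = c t := by
      rw [hc]
      beta_reduce
      rw [← Finset.mul_prod_erase univ
        (fun i : Fin N => Complex.exp (-(t * v ((i : ℕ) + 1) : ℝ)) *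
          (v ((i : ℕ) + 1) : ℂ) ^ (Function.update x n (x n - 1) i - y i)) (Finset.mem_univ n),
        ← Finset.mul_prod_erase univ
        (fun i : Fin N => Complex.exp (-(t * v ((i : ℕ) + 1) : ℝ)) *
          (v ((i : ℕ) + 1) : ℂ) ^ (x i - y i)) (Finset.mem_univ n)]
      have he : ∏ i ∈ univ.erase n,
          (Complex.exp (-(t * v ((i : ℕ) + 1) : ℝ)) *
            (v ((i : ℕ) + 1) : ℂ) ^ (Function.update x n (x n - 1) i - y i))
          = ∏ i ∈ univ.erase n,
          (Complex.exp (-(t * v ((i : ℕ) + 1) : ℝ)) *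
            (v ((i : ℕ) + 1) : ℂ) ^ (x i - y i)) := by
        refine Finset.prod_congr rfl fun i hi => ?_
        rw [Function.update_of_ne (Finset.mem_erase.1 hi).1]
      rw [he, Function.update_self,
        show x n - 1 - y n = (x n - y n) - 1 by ring,
        zpow_sub_one₀ (hvne ((n : ℕ) + 1))]
      field_simp
      rw [mul_assoc]
      exact mul_div_cancel_left₀ _ (hvne _)
    simp only [Pc]
    rw [hM, ← hcc]
    ring
  -- assemble
  have hfinal := hcder.mul hdet
  rw [show (fun s : ℝ => Pc N v ε y x s) = fun s => c s * (A s).det from rfl]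
  convert hfinal using 1
  rfl
  rfl
  rw [Finset.sum_congr rfl fun n _ => hkey n, ← Finset.mul_sum]
  have hPx : Pc N v ε y x t = c t * (A t).det := rfl
  rw [hPx]
  ring
end

section
/- Initial condition for two particles: for $N=2$, rates $v_1,v_2\in(0,v_{\max}]$, and initial positions $y_1<y_2$, the determinant formula evaluated at $t=0$ reproduces the Kronecker delta on the physical domain: for all $x_1<x_2$, $\prod_{i=1,2} v_i^{x_i-y_i}\cdot\det\begin{pmatrix}F_{1,1}(x_1-y_1,0)&F_{1,2}(x_2-y_1,0)\\F_{2,1}(x_1-y_2,0)&F_{2,2}(x_2-y_2,0)\end{pmatrix}=\delta_{x_1,y_1}\delta_{x_2,y_2}$. -/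
open Finset

open Complex Metric

private lemma twopiI_ne : (2 * Real.pi * Complex.I) ≠ 0 := by
  simp [Real.pi_ne_zero, Complex.I_ne_zero]

private lemma int_zpow {ε : ℝ} (hε : 0 < ε) (n : ℤ) :
    (∮ z in C((0:ℂ), ε), z ^ n) = if n = -1 then 2 * Real.pi * Complex.I else 0 := by
  split_ifs with h
  · subst h
    simpa using circleIntegral.integral_sub_inv_of_mem_ball
      (show (0:ℂ) ∈ ball (0:ℂ) ε from mem_ball_self hε)
  · simpa using circleIntegral.integral_sub_zpow_of_ne h 0 0 ε

private lemma one_sub_ne {v ε : ℝ} (hv : 0 < v) (hvε : v * ε < 1) {z : ℂ}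
    (hz : ‖z‖ ≤ ε) : (1 : ℂ) - v * z ≠ 0 := by
  intro h
  have h1 : (v:ℂ) * z = 1 := by linear_combination -h
  have h2 := congrArg norm h1
  simp only [norm_mul, Complex.norm_real, Real.norm_eq_abs, abs_of_pos hv, norm_one] at h2
  nlinarith [norm_nonneg z]

private lemma F11_eq (v : ℕ → ℝ) {ε : ℝ} (hε : 0 < ε) (x : ℤ) :
    F v ε 1 1 x 0 = if x = 0 then 1 else 0 := by
  have h : (∮ z in C((0:ℂ), ε), Complex.exp (((0:ℝ):ℂ)/z) * z ^ (x-1) *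
      (∏ i ∈ range (1-1), (1 - (v (i+1) : ℂ) * z)⁻¹) *
      ∏ i ∈ range (1-1), (1 - (v (i+1) : ℂ) * z)) = ∮ z in C((0:ℂ), ε), z ^ (x-1) := by
    congr 1; funext z; simp
  rw [F, h, int_zpow hε]
  rcases eq_or_ne x 0 with rfl | hx
  · rw [if_pos (by norm_num : (0:ℤ) - 1 = -1), if_pos rfl, inv_mul_cancel₀ twopiI_ne]
  · have hx' : x - 1 ≠ -1 := by omega
    simp [hx, hx']

private lemma F22_eq (v : ℕ → ℝ) {ε : ℝ} (hε : 0 < ε) (hv : 0 < v 1)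
    (hvε : v 1 * ε < 1) (x : ℤ) : F v ε 2 2 x 0 = if x = 0 then 1 else 0 := by
  have h : (∮ z in C((0:ℂ), ε), Complex.exp (((0:ℝ):ℂ)/z) * z ^ (x-1) *
      (∏ i ∈ range (2-1), (1 - (v (i+1) : ℂ) * z)⁻¹) *
      ∏ i ∈ range (2-1), (1 - (v (i+1) : ℂ) * z)) = ∮ z in C((0:ℂ), ε), z ^ (x-1) := by
    refine circleIntegral.integral_congr hε.le fun z hz => ?_
    have hz' : ‖z‖ = ε := by simpa using mem_sphere_zero_iff_norm.mp hz
    have h1 : (1 : ℂ) - v 1 * z ≠ 0 := one_sub_ne hv hvε hz'.le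
    simp only [show (2:ℕ) - 1 = 1 from rfl, prod_range_one, Complex.ofReal_zero, zero_div, Complex.exp_zero, one_mul]
    field_simp
  rw [F, h, int_zpow hε]
  rcases eq_or_ne x 0 with rfl | hx
  · rw [if_pos (by norm_num : (0:ℤ) - 1 = -1), if_pos rfl, inv_mul_cancel₀ twopiI_ne]
  · have hx' : x - 1 ≠ -1 := by omega
    simp [hx, hx']

private lemma F12_eq_zero (v : ℕ → ℝ) {ε : ℝ} (hε : 0 < ε) (hv : 0 < v 1)
    (hvε : v 1 * ε < 1) {x : ℤ} (hx : 1 ≤ x) : F v ε 1 2 x 0 = 0 := by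
  obtain ⟨n, hn⟩ : ∃ n : ℕ, x - 1 = (n : ℤ) := ⟨(x - 1).toNat, by omega⟩
  have h : (∮ z in C((0:ℂ), ε), Complex.exp (((0:ℝ):ℂ)/z) * z ^ (x-1) *
      (∏ i ∈ range (2-1), (1 - (v (i+1) : ℂ) * z)⁻¹) *
      ∏ i ∈ range (1-1), (1 - (v (i+1) : ℂ) * z)) =
      ∮ z in C((0:ℂ), ε), z ^ n * (1 - (v 1 : ℂ) * z)⁻¹ := by
    congr 1; funext z
    simp [hn, prod_range_one, zpow_natCast]
  have hd : ∀ z ∈ closedBall (0:ℂ) ε,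
      DifferentiableAt ℂ (fun z : ℂ => z ^ n * (1 - (v 1 : ℂ) * z)⁻¹) z := by
    intro z hz
    have h1 : (1 : ℂ) - v 1 * z ≠ 0 :=
      one_sub_ne hv hvε (by simpa using mem_closedBall_zero_iff.mp hz)
    exact (differentiableAt_pow n).mul
      (((differentiableAt_const _).sub ((differentiableAt_const _).mul differentiableAt_id)).inv h1)
  have hzero : (∮ z in C((0:ℂ), ε), z ^ n * (1 - (v 1 : ℂ) * z)⁻¹) = 0 :=
    circleIntegral_eq_zero_of_differentiable_on_off_countable hε.le Set.countable_empty
      (fun z hz => (hd z hz).continuousAt.continuousWithinAt)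
      (fun z hz => hd z (ball_subset_closedBall hz.1))
  rw [F, h, hzero, mul_zero]

private lemma circleInt_zpow_integrable {ε : ℝ} (hε : 0 < ε) (m : ℤ) (a : ℂ) :
    CircleIntegrable (fun z : ℂ => a • z ^ m) 0 ε := by
  refine ContinuousOn.circleIntegrable hε.le fun z hz => ?_
  have hz0 : z ≠ 0 := by
    have hz' : ‖z‖ = ε := by simpa using mem_sphere_zero_iff_norm.mp hz
    intro h0
    rw [h0, norm_zero] at hz'
    exact hε.ne' hz'.symm
  exact ((continuousAt_const : ContinuousAt (fun _ : ℂ => a) z).smul (continuousAt_zpow₀ z m (Or.inl hz0))).continuousWithinAt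

private lemma F21_eq_zero (v : ℕ → ℝ) {ε : ℝ} (hε : 0 < ε) {x : ℤ}
    (hx0 : x ≠ 0) (hx1 : x ≠ -1) : F v ε 2 1 x 0 = 0 := by
  have h : (∮ z in C((0:ℂ), ε), Complex.exp (((0:ℝ):ℂ)/z) * z ^ (x-1) *
      (∏ i ∈ range (1-1), (1 - (v (i+1) : ℂ) * z)⁻¹) *
      ∏ i ∈ range (2-1), (1 - (v (i+1) : ℂ) * z)) =
      ∮ z in C((0:ℂ), ε), (z ^ (x-1) - (v 1 : ℂ) • z ^ x) := by
    refine circleIntegral.integral_congr hε.le fun z hz => ?_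
    have hz' : ‖z‖ = ε := by simpa using mem_sphere_zero_iff_norm.mp hz
    have hz0 : z ≠ 0 := by
      intro h0
      rw [h0, norm_zero] at hz'
      exact hε.ne' hz'.symm
    have hpow : z ^ (x - 1) * z = z ^ x := by
      rw [← zpow_add_one₀ hz0]; ring_nf
    simp only [show (1:ℕ) - 1 = 0 from rfl, show (2:ℕ) - 1 = 1 from rfl, prod_range_zero,
      prod_range_one, Complex.ofReal_zero, zero_div, Complex.exp_zero, one_mul,
      mul_one, smul_eq_mul]
    linear_combination (-(v 1 : ℂ)) * hpow
  have hint1 : CircleIntegrable (fun z : ℂ => z ^ (x - 1)) 0 ε := by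
    simpa using circleInt_zpow_integrable hε (x - 1) 1
  have hint2 : CircleIntegrable (fun z : ℂ => (v 1 : ℂ) • z ^ x) 0 ε :=
    circleInt_zpow_integrable hε x _
  rw [F, h, circleIntegral.integral_sub hint1 hint2, circleIntegral.integral_smul,
    int_zpow hε, int_zpow hε]
  have hx1' : x - 1 ≠ -1 := by omega
  simp [hx1, hx1']

theorem initial_condition_two_particles
    (v : ℕ → ℝ) (vmax : ℝ) (hv : ∀ i, 0 < v i) (hvm : ∀ i, v i ≤ vmax)
    (ε : ℝ) (hε : 0 < ε) (hεm : ε < 1 / vmax)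
    (y₁ y₂ : ℤ) (hy : y₁ < y₂) (x₁ x₂ : ℤ) (hx : x₁ < x₂) :
    (v 1 : ℂ) ^ (x₁ - y₁) * (v 2 : ℂ) ^ (x₂ - y₂) *
      Matrix.det !![F v ε 1 1 (x₁ - y₁) 0, F v ε 1 2 (x₂ - y₁) 0;
                    F v ε 2 1 (x₁ - y₂) 0, F v ε 2 2 (x₂ - y₂) 0] =
      if x₁ = y₁ ∧ x₂ = y₂ then 1 else 0 := by
  have hvmax : 0 < vmax := lt_of_lt_of_le (hv 1) (hvm 1)
  have hεvm : ε * vmax < 1 := (lt_div_iff₀ hvmax).mp hεm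
  have hv1ε : v 1 * ε < 1 := by nlinarith [hvm 1, hv 1, hε]
  rw [Matrix.det_fin_two_of, F11_eq v hε, F22_eq v hε (hv 1) hv1ε]
  have hsec : F v ε 1 2 (x₂ - y₁) 0 * F v ε 2 1 (x₁ - y₂) 0 = 0 := by
    by_cases hc : x₁ - y₂ = 0 ∨ x₁ - y₂ = -1
    · have hb : 1 ≤ x₂ - y₁ := by omega
      rw [F12_eq_zero v hε (hv 1) hv1ε hb, zero_mul]
    · push_neg at hc
      rw [F21_eq_zero v hε hc.1 hc.2, mul_zero]
  rw [hsec, sub_zero]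
  rcases eq_or_ne x₁ y₁ with rfl | h1
  · rcases eq_or_ne x₂ y₂ with rfl | h2
    · simp
    · have h2' : x₂ - y₂ ≠ 0 := sub_ne_zero.mpr h2
      simp [h2, h2']
  · have h1' : x₁ - y₁ ≠ 0 := sub_ne_zero.mpr h1
    simp [h1, h1']
end

section
/- Equivalence of the two forms of the current distribution determinant: for any integer $x$, $t\ge0$, and rates $v_1,\dots,v_N>0$, the $N\times N$ determinant with entries $A_{m,n}=F_{m,n+1}(x+N-m+n-1,t)$ equals the determinant with entries $B_{m,n}=F_{1,n+1}(x+N-m+n-1,t)$, where $F_{k,l}$ are the contour-integral functions. -/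
open Finset

/-- The polynomial `∏_{i=1}^m (1 - v_i X)`. -/
noncomputable def Pv (v : ℕ → ℝ) (m : ℕ) : Polynomial ℂ :=
  ∏ i ∈ range m, (1 - Polynomial.C ((v (i + 1) : ℂ)) * Polynomial.X)

lemma Pv_coeff_zero (v : ℕ → ℝ) (m : ℕ) : (Pv v m).coeff 0 = 1 := by
  have h : (Pv v m).coeff 0 = (Pv v m).eval 0 := by
    simp [Polynomial.eval_eq_sum_range, Finset.sum_range_succ']
  rw [h, Pv, Polynomial.eval_prod]
  simp

lemma Pv_natDegree_lt (v : ℕ → ℝ) (m : ℕ) : (Pv v m).natDegree < m + 1 := by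
  have h : (Pv v m).natDegree ≤ ∑ i ∈ range m,
      (1 - Polynomial.C ((v (i + 1) : ℂ)) * Polynomial.X).natDegree :=
    Polynomial.natDegree_prod_le _ _
  refine Nat.lt_succ_of_le (h.trans ?_)
  calc ∑ i ∈ range m, (1 - Polynomial.C ((v (i + 1) : ℂ)) * Polynomial.X).natDegree
      ≤ ∑ _i ∈ range m, 1 := by
        refine Finset.sum_le_sum fun i _ => ?_
        refine (Polynomial.natDegree_sub_le _ _).trans (max_le (by simp) ?_)
        exact (Polynomial.natDegree_C_mul_le _ _).trans (by simp [Polynomial.natDegree_X])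
    _ = m := by simp

lemma Pv_eval (v : ℕ → ℝ) (m : ℕ) (z : ℂ) :
    (Pv v m).eval z = ∏ i ∈ range m, (1 - (v (i + 1) : ℂ) * z) := by
  rw [Pv, Polynomial.eval_prod]; simp

/-- The integrand of `F`, as a function of the circle parameter `θ`. -/
noncomputable def Gd (v : ℕ → ℝ) (ε : ℝ) (k l : ℕ) (t : ℝ) (y : ℤ) (θ : ℝ) : ℂ :=
  deriv (circleMap 0 ε) θ •
    (Complex.exp ((t : ℂ) / circleMap 0 ε θ) * circleMap 0 ε θ ^ (y - 1) *
      (∏ i ∈ range (l - 1), (1 - (v (i + 1) : ℂ) * circleMap 0 ε θ)⁻¹) *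
      ∏ i ∈ range (k - 1), (1 - (v (i + 1) : ℂ) * circleMap 0 ε θ))

lemma F_eq (v : ℕ → ℝ) (ε : ℝ) (k l : ℕ) (x : ℤ) (t : ℝ) :
    F v ε k l x t =
      (2 * Real.pi * Complex.I)⁻¹ * ∫ θ in (0:ℝ)..2 * Real.pi, Gd v ε k l t x θ :=
  rfl

lemma Gd_continuous (v : ℕ → ℝ) (vmax : ℝ) (hv : ∀ i, 0 < v i) (hvm : ∀ i, v i ≤ vmax)
    (ε : ℝ) (hε : 0 < ε) (hεm : ε < 1 / vmax) (k l : ℕ) (t : ℝ) (y : ℤ) :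
    Continuous (Gd v ε k l t y) := by
  have hzne : ∀ θ : ℝ, circleMap 0 ε θ ≠ 0 := fun θ => circleMap_ne_center hε.ne'
  have habs : ∀ θ : ℝ, ‖circleMap 0 ε θ‖ = ε := by
    intro θ; simp [abs_of_pos hε]
  have hvz : ∀ i (θ : ℝ), (1 : ℂ) - (v i : ℂ) * circleMap 0 ε θ ≠ 0 := by
    intro i θ
    have h1 : ‖(v i : ℂ) * circleMap 0 ε θ‖ < 1 := by
      rw [norm_mul, habs, Complex.norm_real, Real.norm_eq_abs, abs_of_pos (hv i)]
      have hlt : ε < 1 / v i := hεm.trans_le (one_div_le_one_div_of_le (hv i) (hvm i))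
      calc v i * ε < v i * (1 / v i) := mul_lt_mul_of_pos_left hlt (hv i)
        _ = 1 := mul_one_div_cancel (hv i).ne'
    intro h
    have h2 : (v i : ℂ) * circleMap 0 ε θ = 1 := by linear_combination -h
    rw [h2] at h1; simp at h1
  unfold Gd
  have hcm : Continuous (circleMap 0 ε) := continuous_circleMap 0 ε
  have hd : Continuous (deriv (circleMap 0 ε)) := by
    have hdd : deriv (circleMap 0 ε) = fun θ => circleMap 0 ε θ * Complex.I :=
      funext fun θ => deriv_circleMap _ _ _
    rw [hdd]
    exact hcm.mul continuous_const
  refine hd.smul ?_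
  refine (((Complex.continuous_exp.comp
      (continuous_const.div hcm hzne)).mul ?_).mul ?_).mul ?_
  · exact hcm.zpow₀ _ (fun θ => Or.inl (hzne θ))
  · exact continuous_finset_prod _ fun i _ =>
      ((continuous_const.sub (continuous_const.mul hcm)).inv₀ fun θ => hvz (i + 1) θ)
  · exact continuous_finset_prod _ fun i _ =>
      continuous_const.sub (continuous_const.mul hcm)

lemma Gd_expand (v : ℕ → ℝ) (ε : ℝ) (hε : 0 < ε) (m l : ℕ) (t : ℝ) (x : ℤ) (θ : ℝ) :
    Gd v ε (m + 1) l t x θ =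
      ∑ j ∈ range (m + 1), (Pv v m).coeff j * Gd v ε 1 l t (x + j) θ := by
  have hz : circleMap 0 ε θ ≠ 0 := circleMap_ne_center hε.ne'
  set z := circleMap 0 ε θ with hzdef
  have hprod : ∏ i ∈ range (m + 1 - 1), (1 - (v (i + 1) : ℂ) * z)
      = ∑ j ∈ range (m + 1), (Pv v m).coeff j * z ^ j := by
    rw [Nat.add_sub_cancel, ← Pv_eval,
      Polynomial.eval_eq_sum_range' (Pv_natDegree_lt v m)]
  unfold Gd
  simp only [smul_eq_mul, ← hzdef]
  rw [hprod, Finset.mul_sum, Finset.mul_sum]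
  refine Finset.sum_congr rfl fun j _ => ?_
  have hzp : z ^ (x + (j : ℤ) - 1) = z ^ (x - 1) * z ^ (j : ℕ) := by
    rw [show x + (j : ℤ) - 1 = (x - 1) + (j : ℤ) by ring, zpow_add₀ hz, zpow_natCast]
  rw [hzp]; ring

/-- The key expansion: `F_{m+1,l}(x) = Σ_j c_j F_{1,l}(x+j)` where `c_j` are the
coefficients of `∏_{i=1}^m (1 - v_i z)`. -/
lemma F_expand (v : ℕ → ℝ) (vmax : ℝ) (hv : ∀ i, 0 < v i) (hvm : ∀ i, v i ≤ vmax)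
    (ε : ℝ) (hε : 0 < ε) (hεm : ε < 1 / vmax)
    (m l : ℕ) (x : ℤ) (t : ℝ) :
    F v ε (m + 1) l x t =
      ∑ j ∈ range (m + 1), (Pv v m).coeff j * F v ε 1 l (x + j) t := by
  have hint : ∀ y : ℤ, IntervalIntegrable (Gd v ε 1 l t y)
      MeasureTheory.volume 0 (2 * Real.pi) := fun y =>
    (Gd_continuous v vmax hv hvm ε hε hεm 1 l t y).intervalIntegrable _ _
  calc F v ε (m + 1) l x t
      = (2 * Real.pi * Complex.I)⁻¹ *
          ∫ θ in (0:ℝ)..2 * Real.pi, Gd v ε (m + 1) l t x θ := F_eq ..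
    _ = (2 * Real.pi * Complex.I)⁻¹ *
          ∫ θ in (0:ℝ)..2 * Real.pi,
            ∑ j ∈ range (m + 1), (Pv v m).coeff j * Gd v ε 1 l t (x + j) θ := by
        congr 1
        exact intervalIntegral.integral_congr fun θ _ => Gd_expand v ε hε m l t x θ
    _ = (2 * Real.pi * Complex.I)⁻¹ *
          ∑ j ∈ range (m + 1), (Pv v m).coeff j *
            ∫ θ in (0:ℝ)..2 * Real.pi, Gd v ε 1 l t (x + j) θ := by
        congr 1
        rw [intervalIntegral.integral_finset_sum
          (f := fun j θ => (Pv v m).coeff j * Gd v ε 1 l t (x + j) θ)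
          (fun j _ => (hint (x + j)).const_mul _)]
        exact Finset.sum_congr rfl fun j _ => intervalIntegral.integral_const_mul _ _
    _ = ∑ j ∈ range (m + 1), (Pv v m).coeff j * F v ε 1 l (x + j) t := by
        rw [Finset.mul_sum]
        refine Finset.sum_congr rfl fun j _ => ?_
        rw [F_eq]; ring

theorem determinant_form_A_eq_B
    (N : ℕ) (v : ℕ → ℝ) (vmax : ℝ) (hv : ∀ i, 0 < v i) (hvm : ∀ i, v i ≤ vmax)
    (ε : ℝ) (hε : 0 < ε) (hεm : ε < 1 / vmax)
    (x : ℤ) (t : ℝ) (ht : 0 ≤ t) :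
    Matrix.det (Matrix.of fun m n : Fin N =>
        F v ε ((m : ℕ) + 1) ((n : ℕ) + 2) (x + N - (m : ℤ) + (n : ℤ) - 1) t) =
      Matrix.det (Matrix.of fun m n : Fin N =>
        F v ε 1 ((n : ℕ) + 2) (x + N - (m : ℤ) + (n : ℤ) - 1) t) := by
  set B : Matrix (Fin N) (Fin N) ℂ := Matrix.of fun m n : Fin N =>
    F v ε 1 ((n : ℕ) + 2) (x + N - (m : ℤ) + (n : ℤ) - 1) t with hB
  set M : Matrix (Fin N) (Fin N) ℂ := Matrix.of fun m m' : Fin N =>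
    if (m' : ℕ) ≤ (m : ℕ) then (Pv v m).coeff ((m : ℕ) - (m' : ℕ)) else 0 with hM
  have hAMB : (Matrix.of fun m n : Fin N =>
      F v ε ((m : ℕ) + 1) ((n : ℕ) + 2) (x + N - (m : ℤ) + (n : ℤ) - 1) t) = M * B := by
    ext m n
    rw [Matrix.mul_apply]
    rw [Matrix.of_apply, F_expand v vmax hv hvm ε hε hεm]
    have : ∀ m' : Fin N, M m m' * B m' n =
        if (m' : ℕ) ≤ (m : ℕ) then
          (Pv v m).coeff ((m : ℕ) - (m' : ℕ)) *
            F v ε 1 ((n : ℕ) + 2) (x + N - (m' : ℤ) + (n : ℤ) - 1) t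
        else 0 := by
      intro m'
      simp only [hM, hB, Matrix.of_apply, ite_mul, zero_mul]
    rw [Finset.sum_congr rfl fun m' _ => this m', ← Finset.sum_filter]
    refine Finset.sum_bij'
      (fun (j : ℕ) (hj : j ∈ range ((m : ℕ) + 1)) =>
        (⟨(m : ℕ) - j, lt_of_le_of_lt (Nat.sub_le _ _) m.isLt⟩ : Fin N))
      (fun (m' : Fin N) _ => (m : ℕ) - (m' : ℕ)) ?_ ?_ ?_ ?_ ?_
    · intro j hj
      simp only [Finset.mem_filter, Finset.mem_univ, true_and]
      exact Nat.sub_le _ _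
    · intro m' hm'
      simp only [Finset.mem_filter, Finset.mem_univ, true_and] at hm'
      exact Finset.mem_range.mpr (Nat.lt_succ_of_le (Nat.sub_le _ _))
    · intro j hj
      have hj' : j ≤ (m : ℕ) := Nat.lt_succ_iff.mp (Finset.mem_range.mp hj)
      simp [Nat.sub_sub_self hj']
    · intro m' hm'
      simp only [Finset.mem_filter, Finset.mem_univ, true_and] at hm'
      ext
      simp [Nat.sub_sub_self hm']
    · intro j hj
      have hj' : j ≤ (m : ℕ) := Nat.lt_succ_iff.mp (Finset.mem_range.mp hj)
      have h1 : (m : ℕ) - ((m : ℕ) - j) = j := Nat.sub_sub_self hj'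
      have h2 : (((m : ℕ) - j : ℕ) : ℤ) = (m : ℤ) - (j : ℤ) := by
        omega
      simp only [h1, h2]
      congr 2
      ring
  calc Matrix.det (Matrix.of fun m n : Fin N =>
        F v ε ((m : ℕ) + 1) ((n : ℕ) + 2) (x + N - (m : ℤ) + (n : ℤ) - 1) t)
      = Matrix.det (M * B) := by rw [hAMB]
    _ = Matrix.det M * Matrix.det B := Matrix.det_mul _ _
    _ = Matrix.det B := by
        have htri : M.BlockTriangular OrderDual.toDual := by
          intro i j h
          have hij : (i : ℕ) < (j : ℕ) := h
          simp only [hM, Matrix.of_apply]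
          exact if_neg (Nat.not_le.mpr hij)
        rw [Matrix.det_of_lowerTriangular M htri]
        have : ∀ i : Fin N, M i i = 1 := by
          intro i; simp [hM, Pv_coeff_zero]
        rw [Finset.prod_congr rfl fun i _ => this i]
        simp
end

section
/- Equivalence of the row-constant forms of the current distribution determinant: for any integer $x$, $t\ge0$, and rates $v_1,\dots,v_N>0$, the $N\times N$ determinant with entries $B_{m,n}=F_{1,n+1}(x+N-m+n-1,t)$ equals the Toeplitz-type determinant with entries $C_{m,n}=F_{1,N+1}(x+N-m+n-1,t)$. -/
open Finset

/-- The integrand of `F` when `k = 1`. -/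
noncomputable def G (v : ℕ → ℝ) (t : ℝ) (l : ℕ) (x : ℤ) : ℂ → ℂ := fun z =>
  Complex.exp ((t : ℂ) / z) * z ^ (x - 1) *
      ∏ i ∈ range (l - 1), (1 - (v (i + 1) : ℂ) * z)⁻¹

lemma F_one_eq (v : ℕ → ℝ) (ε : ℝ) (l : ℕ) (x : ℤ) (t : ℝ) :
    F v ε 1 l x t = (2 * Real.pi * Complex.I)⁻¹ * ∮ z in C(0, ε), G v t l x z := by
  simp [F, G]

lemma G_continuous (v : ℕ → ℝ) {ε : ℝ} (hε : 0 < ε) (t : ℝ) (l : ℕ) (x : ℤ)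
    (hne : ∀ i (z : ℂ), z ∈ Metric.sphere (0 : ℂ) ε → (1 : ℂ) - v i * z ≠ 0) :
    Continuous fun θ : ℝ => G v t l x (circleMap 0 ε θ) := by
  have hmem : ∀ θ : ℝ, circleMap 0 ε θ ∈ Metric.sphere (0 : ℂ) ε :=
    fun θ => circleMap_mem_sphere 0 hε.le θ
  have hz : ∀ θ : ℝ, circleMap 0 ε θ ≠ 0 := fun θ => circleMap_ne_center hε.ne'
  unfold G
  refine ((Continuous.cexp ?_).mul ?_).mul ?_
  · exact continuous_const.div (continuous_circleMap 0 ε) hz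
  · exact (continuous_circleMap 0 ε).zpow₀ (x - 1) fun θ => Or.inl (hz θ)
  · refine continuous_finset_prod _ fun i _ => Continuous.inv₀ ?_ ?_
    · exact continuous_const.sub (continuous_const.mul (continuous_circleMap 0 ε))
    · exact fun θ => hne (i + 1) _ (hmem θ)

lemma G_circleIntegrable (v : ℕ → ℝ) {ε : ℝ} (hε : 0 < ε) (t : ℝ) (l : ℕ) (x : ℤ)
    (hne : ∀ i (z : ℂ), z ∈ Metric.sphere (0 : ℂ) ε → (1 : ℂ) - v i * z ≠ 0) :
    CircleIntegrable (G v t l x) 0 ε :=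
  (G_continuous v hε t l x hne).intervalIntegrable _ _

lemma G_rec (v : ℕ → ℝ) (t : ℝ) {l : ℕ} (hl : 1 ≤ l) (x : ℤ) {z : ℂ} (hz : z ≠ 0)
    (h1 : (1 : ℂ) - v l * z ≠ 0) :
    G v t l x z = G v t (l + 1) x z - (v l : ℂ) * G v t (l + 1) (x + 1) z := by
  unfold G
  have hrange : (l + 1) - 1 = (l - 1) + 1 := by omega
  have hvl : (l - 1) + 1 = l := by omega
  rw [hrange, prod_range_succ, hvl]
  have hx : x + 1 - 1 = x := by ring
  rw [hx]
  have hzx : z ^ x = z ^ (x - 1) * z := by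
    rw [← zpow_add_one₀ hz]; ring_nf
  rw [hzx]
  have key : ((1 : ℂ) - (v l : ℂ) * z)⁻¹ * ((1 : ℂ) - (v l : ℂ) * z) = 1 :=
    inv_mul_cancel₀ h1
  linear_combination (-(Complex.exp ((t : ℂ) / z) * z ^ (x - 1) *
    ∏ i ∈ range (l - 1), (1 - (v (i + 1) : ℂ) * z)⁻¹)) * key

lemma F_rec (v : ℕ → ℝ) {ε : ℝ} (hε : 0 < ε) (t : ℝ) {l : ℕ} (hl : 1 ≤ l) (x : ℤ)
    (hne : ∀ i (z : ℂ), z ∈ Metric.sphere (0 : ℂ) ε → (1 : ℂ) - v i * z ≠ 0) :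
    F v ε 1 l x t = F v ε 1 (l + 1) x t - (v l : ℂ) * F v ε 1 (l + 1) (x + 1) t := by
  rw [F_one_eq, F_one_eq, F_one_eq]
  have hint : (∮ z in C(0, ε), G v t l x z)
      = ∮ z in C(0, ε), (G v t (l + 1) x z - (v l : ℂ) • G v t (l + 1) (x + 1) z) := by
    refine circleIntegral.integral_congr hε.le fun z hz => ?_
    have hz0 : z ≠ 0 := by
      intro h
      rw [Metric.mem_sphere, h] at hz
      simp at hz
      exact hε.ne' hz.symm
    simpa [smul_eq_mul] using G_rec v t hl x hz0 (hne l z hz)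
  have hsm : CircleIntegrable (fun z => (v l : ℂ) • G v t (l + 1) (x + 1) z) 0 ε :=
    Continuous.intervalIntegrable
      ((G_continuous v hε t (l + 1) (x + 1) hne).const_smul ((v l : ℂ))) _ _
  rw [hint, circleIntegral.integral_sub (G_circleIntegrable v hε t (l + 1) x hne) hsm,
    circleIntegral.integral_smul]
  simp [smul_eq_mul]
  ring

theorem determinant_form_B_eq_C
    (N : ℕ) (v : ℕ → ℝ) (vmax : ℝ) (hv : ∀ i, 0 < v i) (hvm : ∀ i, v i ≤ vmax)
    (ε : ℝ) (hε : 0 < ε) (hεm : ε < 1 / vmax)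
    (x : ℤ) (t : ℝ) (ht : 0 ≤ t) :
    Matrix.det (Matrix.of fun m n : Fin N =>
        F v ε 1 ((n : ℕ) + 2) (x + N - (m : ℤ) + (n : ℤ) - 1) t) =
      Matrix.det (Matrix.of fun m n : Fin N =>
        F v ε 1 (N + 1) (x + N - (m : ℤ) + (n : ℤ) - 1) t) := by
  have hvmax : 0 < vmax := lt_of_lt_of_le (hv 0) (hvm 0)
  have hεv : vmax * ε < 1 := by
    rw [lt_div_iff₀ hvmax] at hεm
    linarith [mul_comm ε vmax]
  have hne : ∀ i (z : ℂ), z ∈ Metric.sphere (0 : ℂ) ε → (1 : ℂ) - v i * z ≠ 0 := by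
    intro i z hz h
    rw [sub_eq_zero] at h
    have habs : ‖(v i : ℂ) * z‖ = 1 := by rw [← h]; simp
    rw [norm_mul, Complex.norm_real, Real.norm_of_nonneg (hv i).le] at habs
    have hzabs : ‖z‖ = ε := by
      rwa [Metric.mem_sphere, Complex.dist_eq, sub_zero] at hz
    rw [hzabs] at habs
    have : v i * ε ≤ vmax * ε := by
      apply mul_le_mul_of_nonneg_right (hvm i) hε.le
    linarith
  -- the family of matrices
  set M : ℕ → Matrix (Fin N) (Fin N) ℂ := fun l => Matrix.of fun m n : Fin N =>
    F v ε 1 (max ((n : ℕ) + 2) l) (x + N - (m : ℤ) + (n : ℤ) - 1) t with hM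
  have hstep : ∀ l : ℕ, l ≤ N → (M l).det = (M (l + 1)).det := by
    intro l hlN
    -- column operation matrix
    set T : Matrix (Fin N) (Fin N) ℂ := Matrix.of fun k n : Fin N =>
      if k = n then 1 else
        if (k : ℕ) = (n : ℕ) + 1 ∧ (n : ℕ) + 2 ≤ l then -(v l : ℂ) else 0 with hT
    have hlow : T.BlockTriangular OrderDual.toDual := by
      intro i j hij
      simp only [OrderDual.toDual_lt_toDual] at hij
      have h1 : i ≠ j := ne_of_lt hij
      have hval : (i : ℕ) < (j : ℕ) := hij
      have h2 : ¬((i : ℕ) = (j : ℕ) + 1) := by omega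
      simp [hT, h1, h2]
    have hdetT : T.det = 1 := by
      rw [Matrix.det_of_lowerTriangular T hlow]
      simp [hT]
    have hmul : M l = M (l + 1) * T := by
      ext m n
      rw [Matrix.mul_apply]
      by_cases h : (n : ℕ) + 2 ≤ l
      · have hn1 : (n : ℕ) + 1 < N := by omega
        set n' : Fin N := ⟨(n : ℕ) + 1, hn1⟩ with hn'
        have hnn' : n ≠ n' := by
          intro hc
          have := congrArg (Fin.val) hc
          simp [hn'] at this
        have hsum : ∀ k : Fin N, M (l + 1) m k * T k n
            = (if k = n then M (l + 1) m n else 0)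
              + (if k = n' then -(v l : ℂ) * M (l + 1) m n' else 0) := by
          intro k
          by_cases hk1 : k = n
          · subst hk1
            simp [hT, hnn']
          · by_cases hk2 : k = n'
            · subst hk2
              have : (n' : ℕ) = (n : ℕ) + 1 := rfl
              simp [hT, hk1, this, h, mul_comm]
            · have : ¬((k : ℕ) = (n : ℕ) + 1) := by
                intro hc
                apply hk2
                exact Fin.ext hc
              simp [hT, hk1, hk2, this]
        rw [Finset.sum_congr rfl fun k _ => hsum k, Finset.sum_add_distrib,
          Finset.sum_ite_eq' univ n, Finset.sum_ite_eq' univ n']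
        simp only [mem_univ, if_true]
        -- now identify entries
        have hml : max ((n : ℕ) + 2) l = l := by omega
        have hml1 : max ((n : ℕ) + 2) (l + 1) = l + 1 := by omega
        have hml1' : max ((n' : ℕ) + 2) (l + 1) = l + 1 := by
          simp only [hn']; omega
        have hl1 : 1 ≤ l := by omega
        have harg : x + N - (m : ℤ) + ((n' : Fin N) : ℤ) - 1
            = (x + N - (m : ℤ) + (n : ℤ) - 1) + 1 := by
          simp [hn']
          push_cast
          ring
        simp only [hM, Matrix.of_apply, hml, hml1, hml1', harg]
        rw [F_rec v hε t hl1 (x + N - (m : ℤ) + (n : ℤ) - 1) hne]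
        ring
      · have hsum : ∀ k : Fin N, M (l + 1) m k * T k n
            = (if k = n then M (l + 1) m n else 0) := by
          intro k
          by_cases hk1 : k = n
          · subst hk1; simp [hT]
          · simp [hT, hk1, h]
        rw [Finset.sum_congr rfl fun k _ => hsum k, Finset.sum_ite_eq' univ n]
        simp only [mem_univ, if_true]
        have hml : max ((n : ℕ) + 2) l = (n : ℕ) + 2 := by omega
        have hml1 : max ((n : ℕ) + 2) (l + 1) = (n : ℕ) + 2 := by omega
        simp [hM, hml, hml1]
    rw [hmul, Matrix.det_mul, hdetT, mul_one]
  have hchain : ∀ j : ℕ, j ≤ N + 1 → (M 0).det = (M j).det := by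
    intro j
    induction j with
    | zero => intro _; rfl
    | succ j ih =>
      intro hj
      rw [ih (by omega), hstep j (by omega)]
  have h0 : (Matrix.of fun m n : Fin N =>
      F v ε 1 ((n : ℕ) + 2) (x + N - (m : ℤ) + (n : ℤ) - 1) t) = M 0 := by
    ext m n; simp [hM]
  have hN1 : (Matrix.of fun m n : Fin N =>
      F v ε 1 (N + 1) (x + N - (m : ℤ) + (n : ℤ) - 1) t) = M (N + 1) := by
    ext m n
    have : max ((n : ℕ) + 2) (N + 1) = N + 1 := by
      have := n.isLt; omega
    simp [hM, this]
  rw [h0, hN1]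
  exact hchain (N + 1) le_rfl
end

section
/- Two-particle current distribution formula: for $N=2$, initial positions $y_1=-1,y_2=0$, and rates $v_1,v_2>0$, the probability $Q_2(x,t)$ that both particles lie at or beyond sites $x$ and $x+1$ respectively at time $t$ equals $e^{-t(v_1+v_2)}(v_1v_2)^{x+1}\det\begin{pmatrix}F_{1,2}(x+1,t)&F_{1,3}(x+2,t)\\F_{2,2}(x,t)&F_{2,3}(x+1,t)\end{pmatrix}$, and this expression equals $e^{-t(v_1+v_2)}(v_1v_2)^{x+1}\det\begin{pmatrix}F_{1,3}(x+1,t)&F_{1,3}(x+2,t)\\F_{1,3}(x,t)&F_{1,3}(x+1,t)\end{pmatrix}$. -/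
open Finset

/-- The two-particle conditional probability from initial positions `y₁ < y₂`:
`P(x₁,x₂|y₁,y₂;t) = e^{-t(v₁+v₂)} v₁^{x₁-y₁} v₂^{x₂-y₂}
  det [F₁₁(x₁-y₁) F₁₂(x₂-y₁); F₂₁(x₁-y₂) F₂₂(x₂-y₂)]`. -/
noncomputable def P2 (v : ℕ → ℝ) (ε : ℝ) (y₁ y₂ x₁ x₂ : ℤ) (t : ℝ) : ℂ :=
  Complex.exp (-(t * (v 1 + v 2) : ℝ)) * (v 1 : ℂ) ^ (x₁ - y₁) * (v 2 : ℂ) ^ (x₂ - y₂) *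
    Matrix.det !![F v ε 1 1 (x₁ - y₁) t, F v ε 1 2 (x₂ - y₁) t;
                  F v ε 2 1 (x₁ - y₂) t, F v ε 2 2 (x₂ - y₂) t]

open Metric

namespace RS

noncomputable def CI (ε t : ℝ) (f : ℂ → ℂ) (x : ℤ) : ℂ :=
  ∮ z in C(0, ε), Complex.exp ((t : ℂ) / z) * z ^ (x - 1) * f z

variable {ε t : ℝ}

lemma sphere_ne_zero (hε : 0 < ε) {z : ℂ} (hz : z ∈ sphere (0:ℂ) ε) : z ≠ 0 := by
  rw [mem_sphere_zero_iff_norm] at hz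
  intro h; rw [h] at hz; simp at hz; linarith

lemma core_contOn (hε : 0 < ε) (t : ℝ) (x : ℤ) :
    ContinuousOn (fun z : ℂ => Complex.exp ((t : ℂ) / z) * z ^ (x - 1)) (sphere 0 ε) := by
  intro z hz
  have hz0 : z ≠ 0 := sphere_ne_zero hε hz
  exact (((continuousAt_const.div continuousAt_id hz0).cexp.mul
    (continuousAt_zpow₀ _ _ (Or.inl hz0)))).continuousWithinAt

lemma integrand_integrable (hε : 0 < ε) {f : ℂ → ℂ} (hf : ContinuousOn f (sphere 0 ε)) (x : ℤ) :
    CircleIntegrable (fun z => Complex.exp ((t : ℂ) / z) * z ^ (x - 1) * f z) 0 ε :=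
  ((core_contOn hε t x).mul hf).circleIntegrable hε.le


lemma norm_exp_div_le (hε : 0 < ε) (ht : 0 ≤ t) {z : ℂ} (hz : z ∈ sphere (0:ℂ) ε) :
    ‖Complex.exp ((t : ℂ) / z)‖ ≤ Real.exp (t / ε) := by
  rw [mem_sphere_zero_iff_norm] at hz
  rw [Complex.norm_exp]
  apply Real.exp_le_exp.2
  have hre : ((t : ℂ) / z).re = t * z.re / (ε ^ 2) := by
    rw [Complex.div_re]
    simp [Complex.normSq_eq_norm_sq, hz]
  rw [hre]
  have hzre : z.re ≤ ε := by
    calc z.re ≤ |z.re| := le_abs_self _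
    _ ≤ ‖z‖ := Complex.abs_re_le_norm z
    _ = ε := by rw [hz]
  rw [div_le_div_iff₀ (by positivity) hε]
  calc t * z.re * ε ≤ t * ε * ε := by
        nlinarith [mul_le_mul_of_nonneg_left hzre (mul_nonneg ht hε.le)]
  _ = t * ε ^ 2 := by ring

lemma norm_CI_le (hε : 0 < ε) (ht : 0 ≤ t) {f : ℂ → ℂ} {M : ℝ}
    (hM : ∀ z ∈ sphere (0:ℂ) ε, ‖f z‖ ≤ M) (x : ℤ) :
    ‖CI ε t f x‖ ≤ 2 * Real.pi * ε * (Real.exp (t / ε) * ε ^ (x - 1) * M) := by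
  refine circleIntegral.norm_integral_le_of_norm_le_const hε.le (fun z hz => ?_)
  have hz' := mem_sphere_zero_iff_norm.1 hz
  have h0 : (0:ℝ) ≤ M := le_trans (norm_nonneg _) (hM z hz)
  calc ‖Complex.exp ((t : ℂ) / z) * z ^ (x - 1) * f z‖
      = ‖Complex.exp ((t : ℂ) / z)‖ * ‖z ^ (x-1)‖ * ‖f z‖ := by rw [norm_mul, norm_mul]
    _ ≤ Real.exp (t / ε) * ε ^ (x - 1) * M := by
        have h1 := norm_exp_div_le hε ht hz
        have h2 : ‖z ^ (x-1)‖ = ε ^ (x-1) := by rw [norm_zpow, hz']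
        rw [h2]
        have h3 : (0:ℝ) ≤ ε ^ (x-1) := by positivity
        exact mul_le_mul (mul_le_mul_of_nonneg_right h1 h3) (hM z hz) (norm_nonneg _)
          (by positivity)

lemma CI_congr (hε : 0 < ε) {f g : ℂ → ℂ} (h : Set.EqOn f g (sphere 0 ε)) (x : ℤ) :
    CI ε t f x = CI ε t g x :=
  circleIntegral.integral_congr hε.le (fun z hz => by simp only [h hz])

lemma CI_lin (hε : 0 < ε) {f : ℂ → ℂ} (hf : ContinuousOn f (sphere 0 ε)) (w : ℂ) (x : ℤ) :
    CI ε t (fun z => (1 - w * z) * f z) x = CI ε t f x - w * CI ε t f (x + 1) := by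
  have hwf : ContinuousOn (fun z : ℂ => w * z * f z) (sphere 0 ε) :=
    (continuousOn_const.mul continuousOn_id).mul hf
  have key : w * CI ε t f (x + 1) = CI ε t (fun z => w * z * f z) x := by
    rw [CI, ← circleIntegral.integral_const_mul]
    refine circleIntegral.integral_congr hε.le (fun z hz => ?_)
    have hz0 : z ≠ 0 := sphere_ne_zero hε hz
    have : z ^ (x + 1 - 1) = z ^ (x - 1) * z := by
      rw [← zpow_add_one₀ hz0]
      ring_nf
    simp only [this]; ring
  rw [key]
  simp only [CI]
  rw [← circleIntegral.integral_sub (integrand_integrable hε hf x)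
    (integrand_integrable hε hwf x)]
  refine circleIntegral.integral_congr hε.le (fun z hz => ?_)
  ring

lemma CI_inv (hε : 0 < ε) {f : ℂ → ℂ} (hf : ContinuousOn f (sphere 0 ε)) {w : ℂ}
    (hw : ∀ z ∈ sphere (0:ℂ) ε, 1 - w * z ≠ 0) (x : ℤ) :
    CI ε t f x = CI ε t (fun z => (1 - w * z)⁻¹ * f z) x
      - w * CI ε t (fun z => (1 - w * z)⁻¹ * f z) (x + 1) := by
  have hcont : ContinuousOn (fun z : ℂ => (1 - w * z)⁻¹ * f z) (sphere 0 ε) :=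
    (((continuousOn_const.sub (continuousOn_const.mul continuousOn_id)).inv₀ hw)).mul hf
  rw [← CI_lin hε hcont w x]
  refine CI_congr hε (fun z hz => ?_) x
  field_simp [hw z hz]


lemma CI_sum (hε : 0 < ε) {g : ℕ → ℂ → ℂ} (hg : ∀ n, ContinuousOn (g n) (sphere 0 ε))
    (N : ℕ) (x : ℤ) :
    ∑ n ∈ range N, CI ε t (g n) x
      = CI ε t (fun z => ∑ n ∈ range N, g n z) x := by
  induction N with
  | zero => simp [CI, circleIntegral]
  | succ N ih =>
      rw [Finset.sum_range_succ, ih]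
      have hsum : ContinuousOn (fun z : ℂ => ∑ n ∈ range N, g n z) (sphere 0 ε) := by
        apply continuousOn_finset_sum
        intro i _; exact hg i
      have h1 := integrand_integrable (t := t) hε hsum x
      have h2 := integrand_integrable (t := t) hε (hg N) x
      simp only [CI, circleIntegral]
      rw [← intervalIntegral.integral_add h1.out h2.out]
      apply intervalIntegral.integral_congr
      intro θ _
      simp only [smul_eq_mul, Finset.sum_range_succ]
      ring

lemma CI_hasSum (hε : 0 < ε) (ht : 0 ≤ t) {f : ℂ → ℂ} (hf : ContinuousOn f (sphere 0 ε))
    {M : ℝ} (hM : ∀ z ∈ sphere (0:ℂ) ε, ‖f z‖ ≤ M) {w : ℂ} (hw : ‖w‖ * ε < 1) (x : ℤ) :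
    HasSum (fun n : ℕ => w ^ n * CI ε t f (x + n))
      (CI ε t (fun z => (1 - w * z)⁻¹ * f z) x) := by
  have hM0 : 0 ≤ M := le_trans (norm_nonneg _) (hM ε (by simp [abs_of_pos hε]))
  set r : ℝ := ‖w‖ * ε with hr
  have hr0 : 0 ≤ r := by positivity
  have hwz : ∀ z ∈ sphere (0:ℂ) ε, ‖w * z‖ = r := by
    intro z hz
    rw [norm_mul, mem_sphere_zero_iff_norm.1 hz]
  have hne : ∀ z ∈ sphere (0:ℂ) ε, 1 - w * z ≠ 0 := by
    intro z hz h
    have h1 : ‖w * z‖ = r := hwz z hz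
    have h2 : w * z = 1 := by linear_combination -h
    rw [h2, norm_one] at h1
    rw [← h1] at hw
    exact lt_irrefl _ hw
  have hinv : ContinuousOn (fun z : ℂ => (1 - w * z)⁻¹ * f z) (sphere 0 ε) :=
    ((continuousOn_const.sub (continuousOn_const.mul continuousOn_id)).inv₀ hne).mul hf
  have hinvM : ∀ z ∈ sphere (0:ℂ) ε, ‖(1 - w * z)⁻¹ * f z‖ ≤ (1 - r)⁻¹ * M := by
    intro z hz
    rw [norm_mul, norm_inv]
    have h1 : 1 - r ≤ ‖1 - w * z‖ := by
      calc 1 - r = ‖(1:ℂ)‖ - ‖w * z‖ := by rw [hwz z hz]; simp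
      _ ≤ ‖1 - w * z‖ := norm_sub_norm_le _ _
    have h2 : (0:ℝ) < 1 - r := by linarith
    exact mul_le_mul (by rw [inv_le_inv₀ (lt_of_lt_of_le h2 h1) h2]; exact h1)
      (hM z hz) (norm_nonneg _) (by positivity)
  -- step (a) : each summand as CI with modified integrand
  have ha : ∀ n : ℕ, w ^ n * CI ε t f (x + n) = CI ε t (fun z => (w * z) ^ n * f z) x := by
    intro n
    simp only [CI]
    rw [← circleIntegral.integral_const_mul]
    refine circleIntegral.integral_congr hε.le (fun z hz => ?_)
    have hz0 : z ≠ 0 := sphere_ne_zero hε hz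
    have hzp : z ^ (x + n - 1) = z ^ (x - 1) * z ^ (n : ℕ) := by
      rw [← zpow_natCast z n, ← zpow_add₀ hz0]
      ring_nf
    simp only [hzp, mul_pow]
    ring
  -- partial sums
  have hpartial : ∀ N : ℕ, ∑ n ∈ range N, w ^ n * CI ε t f (x + n)
      = CI ε t (fun z => (1 - w * z)⁻¹ * f z) x
        - CI ε t (fun z => (w * z) ^ N * ((1 - w * z)⁻¹ * f z)) x := by
    intro N
    have hgc : ∀ n : ℕ, ContinuousOn (fun z : ℂ => (w * z) ^ n * f z) (sphere 0 ε) :=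
      fun n => (((continuousOn_const.mul continuousOn_id)).pow n).mul hf
    calc ∑ n ∈ range N, w ^ n * CI ε t f (x + n)
        = ∑ n ∈ range N, CI ε t (fun z => (w * z) ^ n * f z) x := by
          exact Finset.sum_congr rfl (fun n _ => ha n)
      _ = CI ε t (fun z => ∑ n ∈ range N, (w * z) ^ n * f z) x := CI_sum hε hgc N x
      _ = CI ε t (fun z => (1 - w * z)⁻¹ * f z
            - (w * z) ^ N * ((1 - w * z)⁻¹ * f z)) x := by
          refine CI_congr hε (fun z hz => ?_) x
          have h1 : (1 : ℂ) - w * z ≠ 0 := hne z hz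
          have h1' : w * z ≠ 1 := by
            intro h; apply h1; rw [h]; ring
          have h1'' : (-1 : ℂ) + w * z ≠ 0 := by
            intro h; apply h1; linear_combination -h
          have key : ((w*z)^N - 1)/(w*z - 1) = (1 - (w*z)^N) * (1 - w*z)⁻¹ := by
            rw [← neg_div_neg_eq, div_eq_mul_inv]
            ring_nf
          rw [← Finset.sum_mul, geom_sum_eq h1', key]
          ring
      _ = _ := by
          simp only [CI]
          have hc1 := integrand_integrable (t := t) hε hinv x
          have hcont2 : ContinuousOn (fun z : ℂ => (w * z) ^ N * ((1 - w * z)⁻¹ * f z))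
              (sphere 0 ε) := ((continuousOn_const.mul continuousOn_id).pow N).mul hinv
          have hc2 : CircleIntegrable (fun z => Complex.exp ((t : ℂ) / z) * z ^ (x - 1) *
              ((w * z) ^ N * ((1 - w * z)⁻¹ * f z))) 0 ε := integrand_integrable hε hcont2 x
          rw [← circleIntegral.integral_sub hc1 hc2]
          refine circleIntegral.integral_congr hε.le (fun z hz => ?_)
          ring
  -- tail tends to zero
  have htail : Filter.Tendsto
      (fun N : ℕ => CI ε t (fun z => (w * z) ^ N * ((1 - w * z)⁻¹ * f z)) x)
      Filter.atTop (nhds 0) := by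
    apply squeeze_zero_norm
      (a := fun N : ℕ => (2 * Real.pi * ε * (Real.exp (t / ε) * ε ^ (x - 1) * ((1 - r)⁻¹ * M))) * r ^ N)
      ?_ ?_
    · intro N
      have hb : ∀ z ∈ sphere (0:ℂ) ε, ‖(w * z) ^ N * ((1 - w * z)⁻¹ * f z)‖
          ≤ r ^ N * ((1 - r)⁻¹ * M) := by
        intro z hz
        rw [norm_mul, norm_pow, hwz z hz]
        exact mul_le_mul_of_nonneg_left (hinvM z hz) (by positivity)
      have := norm_CI_le hε ht hb x
      calc ‖CI ε t (fun z => (w * z) ^ N * ((1 - w * z)⁻¹ * f z)) x‖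
          ≤ 2 * Real.pi * ε * (Real.exp (t / ε) * ε ^ (x - 1) * (r ^ N * ((1 - r)⁻¹ * M))) := this
        _ = (2 * Real.pi * ε * (Real.exp (t / ε) * ε ^ (x - 1) * ((1 - r)⁻¹ * M))) * r ^ N := by
            ring
    · have := (tendsto_pow_atTop_nhds_zero_of_lt_one hr0 hw).const_mul
        (2 * Real.pi * ε * (Real.exp (t / ε) * ε ^ (x - 1) * ((1 - r)⁻¹ * M)))
      simpa using this
  -- summability
  have hsummable : Summable (fun n : ℕ => w ^ n * CI ε t f (x + n)) := by
    apply Summable.of_norm_bounded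
      (g := fun n : ℕ => (2 * Real.pi * ε * (Real.exp (t / ε) * ε ^ (x - 1) * M)) * r ^ n)
      ((summable_geometric_of_lt_one hr0 hw).mul_left _)
    · intro n
      rw [norm_mul, norm_pow]
      have := norm_CI_le hε ht hM (x + n)
      have hzp : (ε : ℝ) ^ (x + n - 1) = ε ^ (x - 1) * ε ^ (n : ℕ) := by
        rw [← zpow_natCast (ε : ℝ) n, ← zpow_add₀ hε.ne']
        ring_nf
      calc ‖w‖ ^ n * ‖CI ε t f (x + n)‖
          ≤ ‖w‖ ^ n * (2 * Real.pi * ε * (Real.exp (t / ε) * ε ^ (x + (n:ℤ) - 1) * M)) :=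
            mul_le_mul_of_nonneg_left this (by positivity)
        _ = (2 * Real.pi * ε * (Real.exp (t / ε) * ε ^ (x - 1) * M)) * r ^ n := by
            rw [hzp, hr, mul_pow]
            ring
  -- identify the limit
  have h1 : Filter.Tendsto (fun N : ℕ => ∑ n ∈ range N, w ^ n * CI ε t f (x + n))
      Filter.atTop (nhds (∑' n : ℕ, w ^ n * CI ε t f (x + n))) :=
    hsummable.hasSum.tendsto_sum_nat
  have h2 : Filter.Tendsto (fun N : ℕ => ∑ n ∈ range N, w ^ n * CI ε t f (x + n))
      Filter.atTop (nhds (CI ε t (fun z => (1 - w * z)⁻¹ * f z) x)) := by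
    have h3 := Filter.Tendsto.const_sub (CI ε t (fun z => (1 - w * z)⁻¹ * f z) x) htail
    simp only [sub_zero] at h3
    simpa only [hpartial] using h3
  have := tendsto_nhds_unique h1 h2
  rw [← this]
  exact hsummable.hasSum


lemma one_sub_ne (hε : 0 < ε) {w : ℂ} (hw : ‖w‖ * ε < 1) :
    ∀ z ∈ sphere (0:ℂ) ε, 1 - w * z ≠ 0 := by
  intro z hz h
  have h1 : ‖w * z‖ = ‖w‖ * ε := by rw [norm_mul, mem_sphere_zero_iff_norm.1 hz]
  have h2 : w * z = 1 := by linear_combination -h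
  rw [h2, norm_one] at h1
  rw [← h1] at hw
  exact lt_irrefl _ hw

lemma norm_inv_le (hε : 0 < ε) {w : ℂ} (hw : ‖w‖ * ε < 1) :
    ∀ z ∈ sphere (0:ℂ) ε, ‖(1 - w * z)⁻¹‖ ≤ (1 - ‖w‖ * ε)⁻¹ := by
  intro z hz
  rw [norm_inv]
  have h1 : 1 - ‖w‖ * ε ≤ ‖1 - w * z‖ := by
    calc 1 - ‖w‖ * ε = ‖(1:ℂ)‖ - ‖w * z‖ := by
          rw [norm_mul, mem_sphere_zero_iff_norm.1 hz]; simp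
    _ ≤ ‖1 - w * z‖ := norm_sub_norm_le _ _
  have h2 : (0:ℝ) < 1 - ‖w‖ * ε := by linarith
  rw [inv_le_inv₀ (lt_of_lt_of_le h2 h1) h2]
  exact h1

lemma summable_double {f : ℕ × ℕ → ℂ} {K r s : ℝ} (hr0 : 0 ≤ r) (hr : r < 1)
    (hs0 : 0 ≤ s) (hs : s < 1) (hb : ∀ m n : ℕ, ‖f (m, n)‖ ≤ K * r ^ m * s ^ n) :
    Summable f := by
  have hK : 0 ≤ K := by
    have := le_trans (norm_nonneg _) (hb 0 0)
    simpa using this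
  apply Summable.of_norm_bounded (g := fun p : ℕ × ℕ => (K * r ^ p.1) * s ^ p.2)
  · exact Summable.mul_of_nonneg ((summable_geometric_of_lt_one hr0 hr).mul_left K)
      (summable_geometric_of_lt_one hs0 hs) (fun m => by positivity) (fun n => by positivity)
  · intro p
    obtain ⟨m, n⟩ := p
    calc ‖f (m, n)‖ ≤ K * r ^ m * s ^ n := hb m n
    _ = K * r ^ m * s ^ n := rfl

lemma zpow_split {u : ℝ} (hu : 0 < u) (k : ℤ) (m : ℕ) :
    u ^ (k + (m : ℤ)) = u ^ k * u ^ m := by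
  rw [zpow_add₀ hu.ne', zpow_natCast]

lemma zpow_split' {u : ℂ} (hu : u ≠ 0) (k : ℤ) (m : ℕ) :
    u ^ (k + (m : ℤ)) = u ^ k * u ^ m := by
  rw [zpow_add₀ hu, zpow_natCast]

lemma norm_real_zpow {r : ℝ} (hr : 0 < r) (k : ℤ) : ‖(r : ℂ) ^ k‖ = r ^ k := by
  rw [norm_zpow, Complex.norm_real, Real.norm_eq_abs, abs_of_pos hr]


section Fconv

variable (v : ℕ → ℝ) {ε t : ℝ}

lemma F_eq (hε : 0 < ε) (k l : ℕ) (x : ℤ) (t : ℝ) :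
    F v ε k l x t = (2 * Real.pi * Complex.I)⁻¹ *
      CI ε t (fun z => (∏ i ∈ range (l - 1), (1 - (v (i + 1) : ℂ) * z)⁻¹) *
        ∏ i ∈ range (k - 1), (1 - (v (i + 1) : ℂ) * z)) x := by
  unfold F CI
  congr 1
  refine circleIntegral.integral_congr hε.le (fun z hz => ?_)
  simp only
  ring

lemma F_eq_11 (hε : 0 < ε) (x : ℤ) (t : ℝ) :
    F v ε 1 1 x t = (2 * Real.pi * Complex.I)⁻¹ * CI ε t (fun _ => (1:ℂ)) x := by
  rw [F_eq v hε 1 1 x t]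
  congr 1
  refine CI_congr hε (fun z hz => ?_) x
  simp

lemma F_eq_12 (hε : 0 < ε) (x : ℤ) (t : ℝ) :
    F v ε 1 2 x t = (2 * Real.pi * Complex.I)⁻¹ *
      CI ε t (fun z => (1 - (v 1 : ℂ) * z)⁻¹) x := by
  rw [F_eq v hε 1 2 x t]
  congr 1
  refine CI_congr hε (fun z hz => ?_) x
  simp

lemma F_eq_13 (hε : 0 < ε) (x : ℤ) (t : ℝ) :
    F v ε 1 3 x t = (2 * Real.pi * Complex.I)⁻¹ *
      CI ε t (fun z => (1 - (v 1 : ℂ) * z)⁻¹ * (1 - (v 2 : ℂ) * z)⁻¹) x := by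
  rw [F_eq v hε 1 3 x t]
  congr 1
  refine CI_congr hε (fun z hz => ?_) x
  simp [Finset.prod_range_succ]
  ring

lemma F_eq_21 (hε : 0 < ε) (x : ℤ) (t : ℝ) :
    F v ε 2 1 x t = (2 * Real.pi * Complex.I)⁻¹ *
      CI ε t (fun z => (1 - (v 1 : ℂ) * z) * (fun _ : ℂ => (1:ℂ)) z) x := by
  rw [F_eq v hε 2 1 x t]
  congr 1
  refine CI_congr hε (fun z hz => ?_) x
  simp

lemma F_eq_22 (hε : 0 < ε) (h1 : ‖((v 1 : ℝ) : ℂ)‖ * ε < 1) (x : ℤ) (t : ℝ) :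
    F v ε 2 2 x t = (2 * Real.pi * Complex.I)⁻¹ * CI ε t (fun _ => (1:ℂ)) x := by
  rw [F_eq v hε 2 2 x t]
  congr 1
  refine CI_congr hε (fun z hz => ?_) x
  have h2 := one_sub_ne hε h1 z hz
  simp only [show (2-1 : ℕ) = 1 from rfl, show (1-1:ℕ) = 0 from rfl,
    Finset.prod_range_one, Finset.prod_range_zero]
  rw [inv_mul_cancel₀ h2]

lemma F_eq_23 (hε : 0 < ε) (h1 : ‖((v 1 : ℝ) : ℂ)‖ * ε < 1) (x : ℤ) (t : ℝ) :
    F v ε 2 3 x t = (2 * Real.pi * Complex.I)⁻¹ *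
      CI ε t (fun z => (1 - (v 2 : ℂ) * z)⁻¹) x := by
  rw [F_eq v hε 2 3 x t]
  congr 1
  refine CI_congr hε (fun z hz => ?_) x
  have h2 := one_sub_ne hε h1 z hz
  simp only [show (3-1 : ℕ) = 2 from rfl, show (2-1:ℕ) = 1 from rfl,
    Finset.prod_range_succ, Finset.prod_range_one, Finset.prod_range_zero]
  norm_num
  rw [mul_comm ((1 - (v 1 : ℂ) * z)⁻¹), mul_assoc, inv_mul_cancel₀ h2, mul_one]

end Fconv


noncomputable def EE (ε t : ℝ) : ℤ → ℂ := CI ε t (fun _ => (1:ℂ))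
noncomputable def BB (v : ℕ → ℝ) (ε t : ℝ) : ℤ → ℂ :=
  CI ε t (fun z => (1 - ((v 1 : ℝ) : ℂ) * z)⁻¹)
noncomputable def AA (v : ℕ → ℝ) (ε t : ℝ) : ℤ → ℂ :=
  CI ε t (fun z => (1 - ((v 2 : ℝ) : ℂ) * z)⁻¹)
noncomputable def DD (v : ℕ → ℝ) (ε t : ℝ) : ℤ → ℂ :=
  CI ε t (fun z => (1 - ((v 1 : ℝ) : ℂ) * z)⁻¹ * (1 - ((v 2 : ℝ) : ℂ) * z)⁻¹)

section Ids

variable (v : ℕ → ℝ) {ε t : ℝ}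

lemma norm_cast_pos {r : ℝ} (hr : 0 < r) : ‖((r : ℝ) : ℂ)‖ = r := by
  rw [Complex.norm_real, Real.norm_eq_abs, abs_of_pos hr]

lemma L_EB (hε : 0 < ε) (h1 : 0 < v 1) (hq1 : v 1 * ε < 1) (y : ℤ) :
    EE ε t y = BB v ε t y - ((v 1 : ℝ) : ℂ) * BB v ε t (y + 1) := by
  have hwa : ‖((v 1 : ℝ) : ℂ)‖ * ε < 1 := by rw [norm_cast_pos h1]; exact hq1
  have h := CI_inv (t := t) hε continuousOn_const (one_sub_ne hε hwa) y
    (f := fun _ => (1:ℂ)) (w := ((v 1 : ℝ) : ℂ))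
  have hc : ∀ (z : ℤ), CI ε t (fun w => (1 - ((v 1:ℝ):ℂ) * w)⁻¹ * (fun _ => (1:ℂ)) w) z
      = CI ε t (fun w => (1 - ((v 1:ℝ):ℂ) * w)⁻¹) z :=
    fun z => CI_congr hε (fun w _ => by simp) z
  unfold EE BB
  rw [h, hc, hc]

lemma L_EA (hε : 0 < ε) (h2 : 0 < v 2) (hq2 : v 2 * ε < 1) (y : ℤ) :
    EE ε t y = AA v ε t y - ((v 2 : ℝ) : ℂ) * AA v ε t (y + 1) := by
  have hwb : ‖((v 2 : ℝ) : ℂ)‖ * ε < 1 := by rw [norm_cast_pos h2]; exact hq2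
  have h := CI_inv (t := t) hε continuousOn_const (one_sub_ne hε hwb) y
    (f := fun _ => (1:ℂ)) (w := ((v 2 : ℝ) : ℂ))
  have hc : ∀ (z : ℤ), CI ε t (fun w => (1 - ((v 2:ℝ):ℂ) * w)⁻¹ * (fun _ => (1:ℂ)) w) z
      = CI ε t (fun w => (1 - ((v 2:ℝ):ℂ) * w)⁻¹) z :=
    fun z => CI_congr hε (fun w _ => by simp) z
  unfold EE AA
  rw [h, hc, hc]

lemma contB (hε : 0 < ε) (h1 : 0 < v 1) (hq1 : v 1 * ε < 1) :
    ContinuousOn (fun z : ℂ => (1 - ((v 1 : ℝ) : ℂ) * z)⁻¹) (sphere 0 ε) := by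
  have hwa : ‖((v 1 : ℝ) : ℂ)‖ * ε < 1 := by rw [norm_cast_pos h1]; exact hq1
  exact (continuousOn_const.sub (continuousOn_const.mul continuousOn_id)).inv₀
    (one_sub_ne hε hwa)

lemma contA (hε : 0 < ε) (h2 : 0 < v 2) (hq2 : v 2 * ε < 1) :
    ContinuousOn (fun z : ℂ => (1 - ((v 2 : ℝ) : ℂ) * z)⁻¹) (sphere 0 ε) := by
  have hwb : ‖((v 2 : ℝ) : ℂ)‖ * ε < 1 := by rw [norm_cast_pos h2]; exact hq2
  exact (continuousOn_const.sub (continuousOn_const.mul continuousOn_id)).inv₀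
    (one_sub_ne hε hwb)

lemma L_BD (hε : 0 < ε) (h1 : 0 < v 1) (h2 : 0 < v 2) (hq1 : v 1 * ε < 1)
    (hq2 : v 2 * ε < 1) (y : ℤ) :
    BB v ε t y = DD v ε t y - ((v 2 : ℝ) : ℂ) * DD v ε t (y + 1) := by
  have hwb : ‖((v 2 : ℝ) : ℂ)‖ * ε < 1 := by rw [norm_cast_pos h2]; exact hq2
  have h := CI_inv (t := t) hε (contB v hε h1 hq1) (one_sub_ne hε hwb) y
    (w := ((v 2 : ℝ) : ℂ))
  have hc : ∀ (z : ℤ), CI ε t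
      (fun w => (1 - ((v 2:ℝ):ℂ) * w)⁻¹ * (1 - ((v 1:ℝ):ℂ) * w)⁻¹) z
      = CI ε t (fun w => (1 - ((v 1:ℝ):ℂ) * w)⁻¹ * (1 - ((v 2:ℝ):ℂ) * w)⁻¹) z :=
    fun z => CI_congr hε (fun w _ => by rw [mul_comm]) z
  unfold BB DD
  rw [h, hc, hc]

lemma L_AD (hε : 0 < ε) (h1 : 0 < v 1) (h2 : 0 < v 2) (hq1 : v 1 * ε < 1)
    (hq2 : v 2 * ε < 1) (y : ℤ) :
    AA v ε t y = DD v ε t y - ((v 1 : ℝ) : ℂ) * DD v ε t (y + 1) := by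
  have hwa : ‖((v 1 : ℝ) : ℂ)‖ * ε < 1 := by rw [norm_cast_pos h1]; exact hq1
  have h := CI_inv (t := t) hε (contA v hε h2 hq2) (one_sub_ne hε hwa) y
    (w := ((v 1 : ℝ) : ℂ))
  unfold AA DD
  rw [h]

lemma L_SA (hε : 0 < ε) (ht : 0 ≤ t) (h2 : 0 < v 2) (hq2 : v 2 * ε < 1) (y : ℤ) :
    HasSum (fun n : ℕ => ((v 2 : ℝ) : ℂ) ^ n * EE ε t (y + n)) (AA v ε t y) := by
  have hwb : ‖((v 2 : ℝ) : ℂ)‖ * ε < 1 := by rw [norm_cast_pos h2]; exact hq2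
  have h := CI_hasSum hε ht (f := fun _ => (1:ℂ)) continuousOn_const
    (M := 1) (fun z _ => by simp) hwb y
  have hc : CI ε t (fun z => (1 - ((v 2:ℝ):ℂ) * z)⁻¹ * (fun _ => (1:ℂ)) z) y
      = CI ε t (fun z => (1 - ((v 2:ℝ):ℂ) * z)⁻¹) y :=
    CI_congr hε (fun w _ => by simp) y
  rw [hc] at h
  unfold EE AA
  exact h

lemma L_SD (hε : 0 < ε) (ht : 0 ≤ t) (h1 : 0 < v 1) (h2 : 0 < v 2)
    (hq1 : v 1 * ε < 1) (hq2 : v 2 * ε < 1) (y : ℤ) :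
    HasSum (fun n : ℕ => ((v 2 : ℝ) : ℂ) ^ n * BB v ε t (y + n)) (DD v ε t y) := by
  have hwa : ‖((v 1 : ℝ) : ℂ)‖ * ε < 1 := by rw [norm_cast_pos h1]; exact hq1
  have hwb : ‖((v 2 : ℝ) : ℂ)‖ * ε < 1 := by rw [norm_cast_pos h2]; exact hq2
  have h := CI_hasSum hε ht (contB v hε h1 hq1)
    (M := (1 - v 1 * ε)⁻¹) (fun z hz => by
      have := norm_inv_le hε hwa z hz
      rwa [norm_cast_pos h1] at this) hwb y
  have hc : CI ε t (fun z => (1 - ((v 2:ℝ):ℂ) * z)⁻¹ * (1 - ((v 1:ℝ):ℂ) * z)⁻¹) y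
      = CI ε t (fun z => (1 - ((v 1:ℝ):ℂ) * z)⁻¹ * (1 - ((v 2:ℝ):ℂ) * z)⁻¹) y :=
    CI_congr hε (fun w _ => by rw [mul_comm]) y
  rw [hc] at h
  unfold BB DD
  exact h

lemma L_nE (hε : 0 < ε) (ht : 0 ≤ t) (y : ℤ) :
    ‖EE ε t y‖ ≤ 2 * Real.pi * ε * Real.exp (t / ε) * ε ^ (y - 1) := by
  have := norm_CI_le hε ht (f := fun _ => (1:ℂ)) (M := 1) (fun z _ => by simp) y
  calc ‖EE ε t y‖ ≤ 2 * Real.pi * ε * (Real.exp (t / ε) * ε ^ (y - 1) * 1) := this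
  _ = 2 * Real.pi * ε * Real.exp (t / ε) * ε ^ (y - 1) := by ring

lemma L_nB (hε : 0 < ε) (ht : 0 ≤ t) (h1 : 0 < v 1) (hq1 : v 1 * ε < 1) (y : ℤ) :
    ‖BB v ε t y‖ ≤ 2 * Real.pi * ε * Real.exp (t / ε) * ε ^ (y - 1) * (1 - v 1 * ε)⁻¹ := by
  have hwa : ‖((v 1 : ℝ) : ℂ)‖ * ε < 1 := by rw [norm_cast_pos h1]; exact hq1
  have := norm_CI_le hε ht (M := (1 - v 1 * ε)⁻¹) (fun z hz => by
      have := norm_inv_le hε hwa z hz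
      rwa [norm_cast_pos h1] at this) y
  calc ‖BB v ε t y‖ ≤ 2 * Real.pi * ε * (Real.exp (t / ε) * ε ^ (y - 1) * (1 - v 1 * ε)⁻¹) := this
  _ = _ := by ring

lemma L_nA (hε : 0 < ε) (ht : 0 ≤ t) (h2 : 0 < v 2) (hq2 : v 2 * ε < 1) (y : ℤ) :
    ‖AA v ε t y‖ ≤ 2 * Real.pi * ε * Real.exp (t / ε) * ε ^ (y - 1) * (1 - v 2 * ε)⁻¹ := by
  have hwb : ‖((v 2 : ℝ) : ℂ)‖ * ε < 1 := by rw [norm_cast_pos h2]; exact hq2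
  have := norm_CI_le hε ht (M := (1 - v 2 * ε)⁻¹) (fun z hz => by
      have := norm_inv_le hε hwb z hz
      rwa [norm_cast_pos h2] at this) y
  calc ‖AA v ε t y‖ ≤ 2 * Real.pi * ε * (Real.exp (t / ε) * ε ^ (y - 1) * (1 - v 2 * ε)⁻¹) := this
  _ = _ := by ring

lemma L_nD (hε : 0 < ε) (ht : 0 ≤ t) (h1 : 0 < v 1) (h2 : 0 < v 2)
    (hq1 : v 1 * ε < 1) (hq2 : v 2 * ε < 1) (y : ℤ) :
    ‖DD v ε t y‖ ≤ 2 * Real.pi * ε * Real.exp (t / ε) * ε ^ (y - 1)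
      * ((1 - v 1 * ε)⁻¹ * (1 - v 2 * ε)⁻¹) := by
  have hwa : ‖((v 1 : ℝ) : ℂ)‖ * ε < 1 := by rw [norm_cast_pos h1]; exact hq1
  have hwb : ‖((v 2 : ℝ) : ℂ)‖ * ε < 1 := by rw [norm_cast_pos h2]; exact hq2
  have := norm_CI_le hε ht (M := (1 - v 1 * ε)⁻¹ * (1 - v 2 * ε)⁻¹) (fun z hz => by
      rw [norm_mul]
      have i1 := norm_inv_le hε hwa z hz
      have i2 := norm_inv_le hε hwb z hz
      rw [norm_cast_pos h1] at i1
      rw [norm_cast_pos h2] at i2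
      have h10 : (0:ℝ) < 1 - v 1 * ε := by linarith
      exact mul_le_mul i1 i2 (norm_nonneg _) (le_of_lt (inv_pos.2 h10))) y
  calc ‖DD v ε t y‖ ≤ 2 * Real.pi * ε * (Real.exp (t / ε) * ε ^ (y - 1)
      * ((1 - v 1 * ε)⁻¹ * (1 - v 2 * ε)⁻¹)) := this
  _ = _ := by ring


lemma L_P2 (hε : 0 < ε) (h1 : 0 < v 1) (hq1 : v 1 * ε < 1) (x₁ x₂ : ℤ) (t : ℝ) :
    P2 v ε (-1) 0 x₁ x₂ t = Complex.exp (-(t * (v 1 + v 2) : ℝ))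
      * ((2 * Real.pi * Complex.I)⁻¹) ^ 2
      * (((v 1 : ℝ) : ℂ) ^ (x₁ + 1) * ((v 2 : ℝ) : ℂ) ^ x₂)
      * (EE ε t (x₁ + 1) * EE ε t x₂
        - BB v ε t (x₂ + 1) * (EE ε t x₁ - ((v 1 : ℝ) : ℂ) * EE ε t (x₁ + 1))) := by
  have hwa : ‖((v 1 : ℝ) : ℂ)‖ * ε < 1 := by rw [norm_cast_pos h1]; exact hq1
  unfold P2
  rw [Matrix.det_fin_two_of]
  have e1 : x₁ - (-1 : ℤ) = x₁ + 1 := by ring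
  have e2 : x₂ - (-1 : ℤ) = x₂ + 1 := by ring
  have e3 : x₁ - (0 : ℤ) = x₁ := by ring
  have e4 : x₂ - (0 : ℤ) = x₂ := by ring
  rw [e1, e2, e3, e4]
  rw [F_eq_11 v hε (x₁+1) t, F_eq_22 v hε hwa x₂ t, F_eq_12 v hε (x₂+1) t,
    F_eq_21 v hε x₁ t]
  have h21 : CI ε t (fun z => (1 - ((v 1:ℝ):ℂ) * z) * (fun _ : ℂ => (1:ℂ)) z) x₁
      = CI ε t (fun _ => (1:ℂ)) x₁ - ((v 1:ℝ):ℂ) * CI ε t (fun _ => (1:ℂ)) (x₁ + 1) :=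
    CI_lin hε continuousOn_const _ x₁
  rw [h21]
  unfold EE BB
  ring

noncomputable def GG (v : ℕ → ℝ) (ε t : ℝ) (y : ℤ) : ℂ :=
  Complex.exp (-(t * (v 1 + v 2) : ℝ)) * ((2 * Real.pi * Complex.I)⁻¹) ^ 2
    * (((v 1 : ℝ) : ℂ) * ((v 2 : ℝ) : ℂ)) ^ (y + 1)
    * (BB v ε t (y + 1) * AA v ε t (y + 1) - DD v ε t (y + 2) * EE ε t y)

lemma L_inner (hε : 0 < ε) (ht : 0 ≤ t) (h1 : 0 < v 1) (h2 : 0 < v 2)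
    (hq1 : v 1 * ε < 1) (hq2 : v 2 * ε < 1) (x₁ : ℤ) :
    HasSum (fun n : ℕ => P2 v ε (-1) 0 x₁ (x₁ + 1 + n) t)
      (Complex.exp (-(t * (v 1 + v 2) : ℝ)) * ((2 * Real.pi * Complex.I)⁻¹) ^ 2
        * (((v 1 : ℝ) : ℂ) * ((v 2 : ℝ) : ℂ)) ^ (x₁ + 1)
        * (EE ε t (x₁ + 1) * AA v ε t (x₁ + 1)
          - DD v ε t (x₁ + 2) * (EE ε t x₁ - ((v 1 : ℝ) : ℂ) * EE ε t (x₁ + 1)))) := by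
  have hb0 : ((v 2 : ℝ) : ℂ) ≠ 0 := by
    simp only [ne_eq, Complex.ofReal_eq_zero]
    exact h2.ne'
  have hS1 := L_SA v hε ht h2 hq2 (x₁ + 1)
  have hS2 := L_SD v hε ht h1 h2 hq1 hq2 (x₁ + 2)
  have h := ((hS1.mul_left (EE ε t (x₁ + 1))).sub
    (hS2.mul_right (EE ε t x₁ - ((v 1 : ℝ) : ℂ) * EE ε t (x₁ + 1)))).mul_left
    (Complex.exp (-(t * (v 1 + v 2) : ℝ)) * ((2 * Real.pi * Complex.I)⁻¹) ^ 2
      * (((v 1 : ℝ) : ℂ) * ((v 2 : ℝ) : ℂ)) ^ (x₁ + 1))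
  have heq : (fun n : ℕ => P2 v ε (-1) 0 x₁ (x₁ + 1 + n) t)
      = fun n : ℕ => Complex.exp (-(t * (v 1 + v 2) : ℝ)) * ((2 * Real.pi * Complex.I)⁻¹) ^ 2
        * (((v 1 : ℝ) : ℂ) * ((v 2 : ℝ) : ℂ)) ^ (x₁ + 1)
        * (EE ε t (x₁ + 1) * (((v 2 : ℝ) : ℂ) ^ n * EE ε t (x₁ + 1 + n))
          - ((v 2 : ℝ) : ℂ) ^ n * BB v ε t (x₁ + 2 + n)
            * (EE ε t x₁ - ((v 1 : ℝ) : ℂ) * EE ε t (x₁ + 1))) := by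
    funext n
    rw [L_P2 v hε h1 hq1 x₁ (x₁ + 1 + n) t]
    have i1 : x₁ + 1 + (n : ℤ) + 1 = x₁ + 2 + (n : ℤ) := by ring
    rw [i1]
    have i2 : ((v 2 : ℝ) : ℂ) ^ (x₁ + 1 + (n : ℤ)) = ((v 2:ℝ):ℂ) ^ (x₁+1) * ((v 2:ℝ):ℂ) ^ n :=
      zpow_split' hb0 (x₁ + 1) n
    rw [i2, mul_zpow]
    ring
  rw [heq]
  exact h

lemma L_tel (hε : 0 < ε) (h1 : 0 < v 1) (h2 : 0 < v 2)
    (hq1 : v 1 * ε < 1) (hq2 : v 2 * ε < 1) (y : ℤ) :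
    Complex.exp (-(t * (v 1 + v 2) : ℝ)) * ((2 * Real.pi * Complex.I)⁻¹) ^ 2
        * (((v 1 : ℝ) : ℂ) * ((v 2 : ℝ) : ℂ)) ^ (y + 1)
        * (EE ε t (y + 1) * AA v ε t (y + 1)
          - DD v ε t (y + 2) * (EE ε t y - ((v 1 : ℝ) : ℂ) * EE ε t (y + 1)))
      = GG v ε t y - GG v ε t (y + 1) := by
  have hab0 : (((v 1 : ℝ) : ℂ) * ((v 2 : ℝ) : ℂ)) ≠ 0 := by
    simp only [ne_eq, mul_eq_zero, Complex.ofReal_eq_zero]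
    push_neg
    exact ⟨h1.ne', h2.ne'⟩
  have hzz : (((v 1 : ℝ) : ℂ) * ((v 2 : ℝ) : ℂ)) ^ (y + 1 + 1)
      = (((v 1 : ℝ) : ℂ) * ((v 2 : ℝ) : ℂ)) ^ (y + 1) * (((v 1 : ℝ) : ℂ) * ((v 2 : ℝ) : ℂ)) :=
    zpow_add_one₀ hab0 (y + 1)
  have hA := L_EB (t := t) v hε h1 hq1 (y + 1)
  have hB := L_EA (t := t) v hε h2 hq2 (y + 1)
  have hC := L_BD (t := t) v hε h1 h2 hq1 hq2 (y + 2)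
  have i1 : y + 1 + 1 = y + 2 := by ring
  have i2 : y + 1 + 2 = y + 3 := by ring
  have i3 : y + 2 + 1 = y + 3 := by ring
  rw [i1] at hzz hA hB
  rw [i3] at hC
  unfold GG
  rw [i1, i2, hzz]
  linear_combination (Complex.exp (-(t * (v 1 + v 2) : ℝ)) * ((2 * Real.pi * Complex.I)⁻¹) ^ 2
      * (((v 1 : ℝ) : ℂ) * ((v 2 : ℝ) : ℂ)) ^ (y + 1)) *
    (AA v ε t (y + 1) * hA - ((v 1:ℝ):ℂ) * EE ε t (y + 1) * hC
      + ((v 1:ℝ):ℂ) * BB v ε t (y + 2) * hB)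


lemma L_Gz (hε : 0 < ε) (ht : 0 ≤ t) (h1 : 0 < v 1) (h2 : 0 < v 2)
    (hq1 : v 1 * ε < 1) (hq2 : v 2 * ε < 1) (x : ℤ) :
    Filter.Tendsto (fun m : ℕ => GG v ε t (x + m)) Filter.atTop (nhds 0) := by
  have hM1 : (0:ℝ) < (1 - v 1 * ε)⁻¹ := inv_pos.2 (by linarith)
  have hM2 : (0:ℝ) < (1 - v 2 * ε)⁻¹ := inv_pos.2 (by linarith)
  set CE := 2 * Real.pi * ε * Real.exp (t / ε) with hCE
  have hCE0 : 0 < CE := by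
    rw [hCE]; positivity
  set M1 := (1 - v 1 * ε)⁻¹
  set M2 := (1 - v 2 * ε)⁻¹
  set P := ‖Complex.exp (-(t * (v 1 + v 2) : ℝ))‖ * ‖(2 * Real.pi * Complex.I)⁻¹‖^2 with hP
  have hP0 : 0 ≤ P := by rw [hP]; positivity
  set K := P * (v 1 * v 2) ^ (x+1) * (CE * ε^x * M1 * (CE * ε^x * M2)
    + CE * ε^(x+1) * (M1*M2) * (CE * ε^(x-1))) with hK
  set rr := (v 1 * ε) * (v 2 * ε) with hrr
  have hrr0 : 0 ≤ rr := by rw [hrr]; positivity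
  have hrr1 : rr < 1 := by
    rw [hrr]
    nlinarith [mul_pos (sub_pos.2 hq1) (mul_pos h2 hε), mul_pos (mul_pos h1 hε) (mul_pos h2 hε)]
  apply squeeze_zero_norm (a := fun m : ℕ => K * rr ^ m) ?_ ?_
  · intro m
    have bB := L_nB v hε ht h1 hq1 (x + (m:ℤ) + 1)
    have bA := L_nA v hε ht h2 hq2 (x + (m:ℤ) + 1)
    have bD := L_nD v hε ht h1 h2 hq1 hq2 (x + (m:ℤ) + 2)
    have bE := L_nE (t := t) hε ht (x + (m:ℤ))
    simp only [add_sub_cancel_right] at bB bA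
    have hQ : ‖BB v ε t (x + (m:ℤ) + 1) * AA v ε t (x + (m:ℤ) + 1)
        - DD v ε t (x + (m:ℤ) + 2) * EE ε t (x + (m:ℤ))‖
        ≤ CE * ε^(x + (m:ℤ)) * M1 * (CE * ε^(x + (m:ℤ)) * M2)
          + CE * ε^(x + (m:ℤ) + 2 - 1) * (M1*M2) * (CE * ε^(x + (m:ℤ) - 1)) := by
      refine le_trans ((norm_sub_le _ _).trans_eq (by rw [norm_mul, norm_mul])) ?_
      refine add_le_add (mul_le_mul bB bA (norm_nonneg _) (by positivity))
        (mul_le_mul bD bE (norm_nonneg _) (by positivity))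
    have hab : ((v 1:ℝ):ℂ) * ((v 2:ℝ):ℂ) = (((v 1 * v 2 : ℝ)):ℂ) := by push_cast; ring
    have key : ‖GG v ε t (x + m)‖ ≤ P * (v 1 * v 2) ^ (x + (m:ℤ) + 1)
        * (CE * ε^(x + (m:ℤ)) * M1 * (CE * ε^(x + (m:ℤ)) * M2)
          + CE * ε^(x + (m:ℤ) + 2 - 1) * (M1*M2) * (CE * ε^(x + (m:ℤ) - 1))) := by
      unfold GG
      calc ‖Complex.exp (-(t * (v 1 + v 2) : ℝ)) * ((2 * Real.pi * Complex.I)⁻¹) ^ 2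
          * (((v 1:ℝ):ℂ) * ((v 2:ℝ):ℂ)) ^ (x + (m:ℤ) + 1)
          * (BB v ε t (x + (m:ℤ) + 1) * AA v ε t (x + (m:ℤ) + 1)
            - DD v ε t (x + (m:ℤ) + 2) * EE ε t (x + (m:ℤ)))‖
          = P * (v 1 * v 2) ^ (x + (m:ℤ) + 1)
            * ‖BB v ε t (x + (m:ℤ) + 1) * AA v ε t (x + (m:ℤ) + 1)
              - DD v ε t (x + (m:ℤ) + 2) * EE ε t (x + (m:ℤ))‖ := by
            rw [hP]
            simp only [norm_mul, norm_pow, norm_zpow, Complex.norm_real, Real.norm_eq_abs,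
              abs_of_pos h1, abs_of_pos h2]
            try rw [← mul_zpow]
            try ring
        _ ≤ _ := mul_le_mul_of_nonneg_left hQ (mul_nonneg hP0 (by positivity))
    refine key.trans (le_of_eq ?_)
    have s1 : x + (m:ℤ) + 1 = (x + 1) + (m:ℤ) := by ring
    have s2 : x + (m:ℤ) + 2 - 1 = (x + 1) + (m:ℤ) := by ring
    have s3 : x + (m:ℤ) - 1 = (x - 1) + (m:ℤ) := by ring
    rw [s1, s2, s3, zpow_split (mul_pos h1 h2) (x+1) m, zpow_split hε (x+1) m,
      zpow_split hε x m, zpow_split hε (x-1) m, hK, hrr]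
    ring
  · have := (tendsto_pow_atTop_nhds_zero_of_lt_one hrr0 hrr1).const_mul K
    simpa using this

lemma L_dbound (hε : 0 < ε) (ht : 0 ≤ t) (h1 : 0 < v 1) (h2 : 0 < v 2)
    (hq1 : v 1 * ε < 1) (hq2 : v 2 * ε < 1) (x : ℤ) :
    Summable (fun p : ℕ × ℕ => P2 v ε (-1) 0 (x + p.1) (x + p.1 + 1 + p.2) t) := by
  have hM1 : (0:ℝ) < (1 - v 1 * ε)⁻¹ := inv_pos.2 (by linarith)
  set CE := 2 * Real.pi * ε * Real.exp (t / ε) with hCE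
  have hCE0 : 0 < CE := by rw [hCE]; positivity
  set M1 := (1 - v 1 * ε)⁻¹
  set P := ‖Complex.exp (-(t * (v 1 + v 2) : ℝ))‖ * ‖(2 * Real.pi * Complex.I)⁻¹‖^2 with hP
  set K := P * ((v 1)^(x+1) * (v 2)^(x+1)) * (CE * ε^x * (CE * ε^x)
    + CE * ε^(x+1) * M1 * (CE * ε^(x-1) + v 1 * (CE * ε^x))) with hK
  set rr := (v 1 * ε) * (v 2 * ε) with hrr
  set ss := v 2 * ε with hss
  have hrr0 : 0 ≤ rr := by rw [hrr]; positivity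
  have hrr1 : rr < 1 := by
    rw [hrr]
    nlinarith [mul_pos (sub_pos.2 hq1) (mul_pos h2 hε), mul_pos (mul_pos h1 hε) (mul_pos h2 hε)]
  have hss0 : 0 ≤ ss := by rw [hss]; positivity
  apply summable_double (K := K) hrr0 hrr1 hss0 (by rw [hss]; exact hq2)
  intro m n
  set X : ℤ := x + (m:ℤ) with hX
  set Y : ℤ := x + (m:ℤ) + 1 + (n:ℤ) with hY
  rw [L_P2 v hε h1 hq1 X Y t]
  have bE1 := L_nE (t := t) hε ht (X + 1)
  have bEY := L_nE (t := t) hε ht Y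
  have bB := L_nB v hε ht h1 hq1 (Y + 1)
  have bE0 := L_nE (t := t) hε ht X
  simp only [add_sub_cancel_right] at bE1 bB
  have hQ : ‖EE ε t (X + 1) * EE ε t Y
      - BB v ε t (Y + 1) * (EE ε t X - ((v 1:ℝ):ℂ) * EE ε t (X + 1))‖
      ≤ CE * ε^X * (CE * ε^(Y-1))
        + CE * ε^Y * M1 * (CE * ε^(X-1) + v 1 * (CE * ε^X)) := by
    refine le_trans ((norm_sub_le _ _).trans_eq (by rw [norm_mul, norm_mul])) ?_
    refine add_le_add (mul_le_mul bE1 bEY (norm_nonneg _) (by positivity)) ?_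
    refine mul_le_mul bB ?_ (norm_nonneg _) (by positivity)
    refine le_trans (norm_sub_le _ _) ?_
    refine add_le_add bE0 ?_
    rw [norm_mul, norm_cast_pos h1]
    exact mul_le_mul_of_nonneg_left bE1 h1.le
  have key : ‖Complex.exp (-(t * (v 1 + v 2) : ℝ)) * ((2 * Real.pi * Complex.I)⁻¹) ^ 2
      * (((v 1:ℝ):ℂ) ^ (X + 1) * ((v 2:ℝ):ℂ) ^ Y)
      * (EE ε t (X + 1) * EE ε t Y
        - BB v ε t (Y + 1) * (EE ε t X - ((v 1:ℝ):ℂ) * EE ε t (X + 1)))‖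
      ≤ P * ((v 1)^(X+1) * (v 2)^Y)
        * (CE * ε^X * (CE * ε^(Y-1))
          + CE * ε^Y * M1 * (CE * ε^(X-1) + v 1 * (CE * ε^X))) := by
    have hP0 : 0 ≤ P := by rw [hP]; positivity
    calc ‖Complex.exp (-(t * (v 1 + v 2) : ℝ)) * ((2 * Real.pi * Complex.I)⁻¹) ^ 2
        * (((v 1:ℝ):ℂ) ^ (X + 1) * ((v 2:ℝ):ℂ) ^ Y)
        * (EE ε t (X + 1) * EE ε t Y
          - BB v ε t (Y + 1) * (EE ε t X - ((v 1:ℝ):ℂ) * EE ε t (X + 1)))‖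
        = P * ((v 1)^(X+1) * (v 2)^Y)
          * ‖EE ε t (X + 1) * EE ε t Y
            - BB v ε t (Y + 1) * (EE ε t X - ((v 1:ℝ):ℂ) * EE ε t (X + 1))‖ := by
          rw [hP]
          simp only [norm_mul, norm_pow, norm_zpow, Complex.norm_real, Real.norm_eq_abs,
            abs_of_pos h1, abs_of_pos h2]
          try ring
      _ ≤ _ := mul_le_mul_of_nonneg_left hQ
          (mul_nonneg hP0 (by positivity))
  refine key.trans (le_of_eq ?_)
  rw [hX, hY]
  have s1 : x + (m:ℤ) + 1 = (x + 1) + (m:ℤ) := by ring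
  have s2 : x + (m:ℤ) + 1 + (n:ℤ) - 1 = (x + (m:ℤ)) + (n:ℤ) := by ring
  have s3 : x + (m:ℤ) - 1 = (x - 1) + (m:ℤ) := by ring
  have s4 : x + (m:ℤ) + 1 + (n:ℤ) = ((x + 1) + (m:ℤ)) + (n:ℤ) := by ring
  rw [s2, s4, s1, s3]
  rw [zpow_split h1 (x+1) m,
    zpow_split h2 ((x+1) + (m:ℤ)) n, zpow_split h2 (x+1) m,
    zpow_split hε ((x + (m:ℤ))) n, zpow_split hε x m,
    zpow_split hε ((x+1) + (m:ℤ)) n, zpow_split hε (x+1) m,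
    zpow_split hε (x-1) m, hK, hrr, hss]
  ring


lemma L_main (hε : 0 < ε) (ht : 0 ≤ t) (h1 : 0 < v 1) (h2 : 0 < v 2)
    (hq1 : v 1 * ε < 1) (hq2 : v 2 * ε < 1) (x : ℤ) :
    HasSum (fun p : ℕ × ℕ => P2 v ε (-1) 0 (x + p.1) (x + p.1 + 1 + p.2) t)
      (GG v ε t x) := by
  have hsum := L_dbound v hε ht h1 h2 hq1 hq2 x
  have hfib : ∀ m : ℕ, HasSum (fun n : ℕ => P2 v ε (-1) 0 (x + m) (x + m + 1 + n) t)
      (GG v ε t (x + m) - GG v ε t (x + m + 1)) := by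
    intro m
    have h := L_inner v hε ht h1 h2 hq1 hq2 (x + m)
    rwa [L_tel v hε h1 h2 hq1 hq2 (x + m)] at h
  have h3 : HasSum (fun m : ℕ => GG v ε t (x + m) - GG v ε t (x + m + 1))
      (∑' p : ℕ × ℕ, P2 v ε (-1) 0 (x + p.1) (x + p.1 + 1 + p.2) t) :=
    hsum.hasSum.prod_fiberwise hfib
  have hpart : ∀ N : ℕ, ∑ m ∈ range N, (GG v ε t (x + m) - GG v ε t (x + m + 1))
      = GG v ε t x - GG v ε t (x + N) := by
    intro N
    have hcast : ∀ m : ℕ, GG v ε t (x + m + 1) = GG v ε t (x + ((m + 1 : ℕ) : ℤ)) := by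
      intro m; congr 1; push_cast; ring
    calc ∑ m ∈ range N, (GG v ε t (x + m) - GG v ε t (x + m + 1))
        = ∑ m ∈ range N, ((fun k : ℕ => GG v ε t (x + k)) m
            - (fun k : ℕ => GG v ε t (x + k)) (m + 1)) := by
          refine Finset.sum_congr rfl (fun m _ => ?_)
          rw [hcast m]
      _ = (fun k : ℕ => GG v ε t (x + k)) 0 - (fun k : ℕ => GG v ε t (x + k)) N :=
          Finset.sum_range_sub' _ N
      _ = GG v ε t x - GG v ε t (x + N) := by
          simp only
          congr 2
          push_cast
          ring
  have h4 : Filter.Tendsto (fun N : ℕ => ∑ m ∈ range N,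
      (GG v ε t (x + m) - GG v ε t (x + m + 1))) Filter.atTop (nhds (GG v ε t x)) := by
    simp only [hpart]
    have h5 := Filter.Tendsto.const_sub (GG v ε t x) (L_Gz v hε ht h1 h2 hq1 hq2 x)
    simpa only [sub_zero] using h5
  have hTsum : Summable (fun m : ℕ => GG v ε t (x + m) - GG v ε t (x + m + 1)) :=
    h3.summable
  have h7 : (∑' m : ℕ, (GG v ε t (x + m) - GG v ε t (x + m + 1))) = GG v ε t x :=
    tendsto_nhds_unique hTsum.hasSum.tendsto_sum_nat h4
  have h8 : (∑' p : ℕ × ℕ, P2 v ε (-1) 0 (x + p.1) (x + p.1 + 1 + p.2) t)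
      = GG v ε t x := by
    rw [← h3.tsum_eq]
    exact h7
  have := hsum.hasSum
  rwa [h8] at this

end Ids

end RS

theorem two_particle_current_distribution
    (v : ℕ → ℝ) (vmax : ℝ) (hv : ∀ i, 0 < v i) (hvm : ∀ i, v i ≤ vmax)
    (ε : ℝ) (hε : 0 < ε) (hεm : ε < 1 / vmax)
    (x : ℤ) (t : ℝ) (ht : 0 ≤ t) :
    HasSum
      (fun p : {p : ℤ × ℤ // x ≤ p.1 ∧ x + 1 ≤ p.2 ∧ p.1 < p.2} =>
        P2 v ε (-1) 0 p.1.1 p.1.2 t)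
      (Complex.exp (-(t * (v 1 + v 2) : ℝ)) * ((v 1 : ℂ) * (v 2 : ℂ)) ^ (x + 1) *
        Matrix.det !![F v ε 1 2 (x + 1) t, F v ε 1 3 (x + 2) t;
                      F v ε 2 2 x t, F v ε 2 3 (x + 1) t]) ∧
    Complex.exp (-(t * (v 1 + v 2) : ℝ)) * ((v 1 : ℂ) * (v 2 : ℂ)) ^ (x + 1) *
        Matrix.det !![F v ε 1 2 (x + 1) t, F v ε 1 3 (x + 2) t;
                      F v ε 2 2 x t, F v ε 2 3 (x + 1) t] =
      Complex.exp (-(t * (v 1 + v 2) : ℝ)) * ((v 1 : ℂ) * (v 2 : ℂ)) ^ (x + 1) *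
        Matrix.det !![F v ε 1 3 (x + 1) t, F v ε 1 3 (x + 2) t;
                      F v ε 1 3 x t, F v ε 1 3 (x + 1) t] := by
  have h1 : 0 < v 1 := hv 1
  have h2 : 0 < v 2 := hv 2
  have hvmax : 0 < vmax := lt_of_lt_of_le h1 (hvm 1)
  have hεv : ε * vmax < 1 := (lt_div_iff₀ hvmax).1 hεm
  have hq1 : v 1 * ε < 1 := by nlinarith [hvm 1]
  have hq2 : v 2 * ε < 1 := by nlinarith [hvm 2]
  have hwa : ‖((v 1 : ℝ) : ℂ)‖ * ε < 1 := by rw [RS.norm_cast_pos h1]; exact hq1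
  have hdet1 : Complex.exp (-(t * (v 1 + v 2) : ℝ)) * ((v 1 : ℂ) * (v 2 : ℂ)) ^ (x + 1) *
        Matrix.det !![F v ε 1 2 (x + 1) t, F v ε 1 3 (x + 2) t;
                      F v ε 2 2 x t, F v ε 2 3 (x + 1) t] = RS.GG v ε t x := by
    rw [Matrix.det_fin_two_of, RS.F_eq_12 v hε (x+1) t, RS.F_eq_23 v hε hwa (x+1) t,
      RS.F_eq_13 v hε (x+2) t, RS.F_eq_22 v hε hwa x t]
    unfold RS.GG RS.BB RS.AA RS.DD RS.EE
    ring
  constructor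
  · rw [hdet1]
    have hmain := RS.L_main v hε ht h1 h2 hq1 hq2 x
    let e : ℕ × ℕ ≃ {p : ℤ × ℤ // x ≤ p.1 ∧ x + 1 ≤ p.2 ∧ p.1 < p.2} :=
      { toFun := fun q => ⟨(x + q.1, x + q.1 + 1 + q.2), by
          refine ⟨?_, ?_, ?_⟩ <;> simp <;> omega⟩
        invFun := fun p => ((p.1.1 - x).toNat, (p.1.2 - p.1.1 - 1).toNat)
        left_inv := by
          rintro ⟨m, n⟩
          simp only
          rw [Prod.mk.injEq]
          constructor <;> omega
        right_inv := by
          rintro ⟨⟨p1, p2⟩, hp⟩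
          obtain ⟨ha, hb, hc⟩ := hp
          apply Subtype.ext
          simp only
          rw [Prod.mk.injEq]
          constructor <;> omega }
    rw [← Equiv.hasSum_iff e]
    have hfe : ((fun p : {p : ℤ × ℤ // x ≤ p.1 ∧ x + 1 ≤ p.2 ∧ p.1 < p.2} =>
        P2 v ε (-1) 0 p.1.1 p.1.2 t) ∘ ⇑e)
        = fun q : ℕ × ℕ => P2 v ε (-1) 0 (x + q.1) (x + q.1 + 1 + q.2) t := by
      funext q
      rfl
    rw [hfe]
    exact hmain
  · rw [Matrix.det_fin_two_of, Matrix.det_fin_two_of,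
      RS.F_eq_12 v hε (x+1) t, RS.F_eq_23 v hε hwa (x+1) t,
      RS.F_eq_13 v hε (x+2) t, RS.F_eq_22 v hε hwa x t,
      RS.F_eq_13 v hε (x+1) t, RS.F_eq_13 v hε x t]
    have i1 : x + 1 + 1 = x + 2 := by ring
    have hB1 := RS.L_BD (t := t) v hε h1 h2 hq1 hq2 (x+1)
    have hA1 := RS.L_AD (t := t) v hε h1 h2 hq1 hq2 (x+1)
    have hE0 := RS.L_EB (t := t) v hε h1 hq1 x
    have hB0 := RS.L_BD (t := t) v hε h1 h2 hq1 hq2 x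
    rw [i1] at hB1 hA1
    unfold RS.BB RS.DD at hB1
    unfold RS.AA RS.DD at hA1
    unfold RS.EE RS.BB at hE0
    unfold RS.BB RS.DD at hB0
    linear_combination (Complex.exp (-(t * (v 1 + v 2) : ℝ)) * ((v 1 : ℂ) * (v 2 : ℂ)) ^ (x + 1)
        * ((2 * Real.pi * Complex.I)⁻¹)^2) *
      ((-(RS.CI ε t (fun z => (1 - ((v 1:ℝ):ℂ) * z)⁻¹ * (1 - ((v 2:ℝ):ℂ) * z)⁻¹) (x+2))) * hE0
        + (-(RS.CI ε t (fun z => (1 - ((v 1:ℝ):ℂ) * z)⁻¹ * (1 - ((v 2:ℝ):ℂ) * z)⁻¹) (x+2))) * hB0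
        + (RS.CI ε t (fun z => (1 - ((v 2:ℝ):ℂ) * z)⁻¹) (x+1)
            + ((v 1 : ℝ):ℂ) * RS.CI ε t (fun z => (1 - ((v 1:ℝ):ℂ) * z)⁻¹ * (1 - ((v 2:ℝ):ℂ) * z)⁻¹) (x+2)) * hB1
        + (RS.CI ε t (fun z => (1 - ((v 1:ℝ):ℂ) * z)⁻¹ * (1 - ((v 2:ℝ):ℂ) * z)⁻¹) (x+1)
            - ((v 2 : ℝ):ℂ) * RS.CI ε t (fun z => (1 - ((v 1:ℝ):ℂ) * z)⁻¹ * (1 - ((v 2:ℝ):ℂ) * z)⁻¹) (x+2)) * hA1)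
end
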